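/- arXiv:1608.07495 — 7 statements merged into one kernel-verified Lean document; each statement's English description precedes it below -/
import Mathlib

section
/- Let X be a closed subspace of a Banach space Y and A a bounded subset of X. Then wk_Y(A) ≤ wk_X(A) ≤ 2·wk_Y(A), where wk_Z(A) = d̂(closure of A in (Z**, weak*), Z) with d̂(B,C) = sup_{b∈B} d(b,C). -/
open NormedSpace Metric Set Filter
open scoped ENNReal

noncomputable section

/-- Hausdorff measure of noncompactness of a set. -/
def hchi {Y : Type*} [SeminormedAddCommGroup Y] (A : Set Y) : ℝ :=
  sInf { r : ℝ | ∃ F : Finset Y, ∀ a ∈ A, ∃ y ∈ F, dist a y ≤ r }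

variable {X Y Z : Type*} [NormedAddCommGroup X] [NormedSpace ℝ X]
  [NormedAddCommGroup Y] [NormedSpace ℝ Y]

/-- χ(T) = Hausdorff measure of noncompactness of T(B_X). -/
def chiOp (T : X →L[ℝ] Y) : ℝ := hchi (T '' closedBall 0 1)

/-- SS(T): the quantity measuring strict singularity. -/
def SS (T : X →L[ℝ] Y) : ℝ :=
  sSup { c : ℝ | ∃ M : Submodule ℝ X, IsClosed (M : Set X) ∧ ¬ FiniteDimensional ℝ M ∧
      c = sInf { r : ℝ | ∃ x ∈ M, ‖x‖ = 1 ∧ r = ‖T x‖ } }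

/-- SS_Z(T): the quantity measuring Z-strict singularity. -/
def SSZ (Z : Type*) [NormedAddCommGroup Z] [NormedSpace ℝ Z] (T : X →L[ℝ] Y) : ℝ :=
  sSup { r : ℝ | ∃ R : Z →L[ℝ] X, ∃ c : ℝ, 0 < c ∧ (∀ z, c * ‖z‖ ≤ ‖T (R z)‖) ∧ r = c / ‖R‖ }

/-- The adjoint (dual) operator T* : Y* → X*. -/
def adjOp (T : X →L[ℝ] Y) : StrongDual ℝ Y →L[ℝ] StrongDual ℝ X :=
  (ContinuousLinearMap.compL ℝ X Y ℝ).flip T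

/-- δ(S) for a (surjective) map S: the supremum of δ > 0 with δ·B ⊆ S(B). -/
def deltaQ {W : Type*} [SeminormedAddCommGroup W] (S : X → W) : ℝ :=
  sSup { d : ℝ | 0 < d ∧ ∀ w : W, ‖w‖ ≤ d → ∃ x : X, ‖x‖ ≤ 1 ∧ S x = w }

/-- SCS(T): the quantity measuring strict cosingularity. -/
def SCS (T : X →L[ℝ] Y) : ℝ :=
  sSup { r : ℝ | ∃ N : Submodule ℝ Y, IsClosed (N : Set Y) ∧ ¬ FiniteDimensional ℝ (Y ⧸ N) ∧
      Function.Surjective (fun x : X => (Submodule.Quotient.mk (T x) : Y ⧸ N)) ∧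
      r = deltaQ (fun x : X => (Submodule.Quotient.mk (T x) : Y ⧸ N)) }

/-- SCS_Z(T): the quantity measuring Z-strict cosingularity. -/
def SCSZ (Z : Type*) [NormedAddCommGroup Z] [NormedSpace ℝ Z] (T : X →L[ℝ] Y) : ℝ :=
  sSup { r : ℝ | ∃ S : Y →L[ℝ] Z, Function.Surjective (fun x : X => S (T x)) ∧
      r = deltaQ (fun x : X => S (T x)) / ‖S‖ }

/-- The annihilator M^⊥ in the continuous dual. -/
def annih (M : Submodule ℝ X) : Submodule ℝ (StrongDual ℝ X) where
  carrier := { f | ∀ x ∈ M, f x = 0 }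
  add_mem' := by intro f g hf hg x hx; simp [hf x hx, hg x hx]
  zero_mem' := by intro x _; simp
  smul_mem' := by intro c f hf x hx; simp [hf x hx]

/-- The quantity wk_Z(A) measuring weak non-compactness. -/
def wkk (Z : Type*) [NormedAddCommGroup Z] [NormedSpace ℝ Z] (A : Set Z) : ℝ :=
  sSup { r : ℝ | ∃ φ : StrongDual ℝ (StrongDual ℝ Z),
      StrongDual.toWeakDual φ ∈ closure (StrongDual.toWeakDual '' (inclusionInDoubleDual ℝ Z '' A)) ∧
      r = Metric.infDist φ (Set.range (inclusionInDoubleDual ℝ Z)) }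

/-- A Banach space is λ-subprojective. -/
def Subprojective (lam : ℝ) (Y : Type*) [NormedAddCommGroup Y] [NormedSpace ℝ Y] : Prop :=
  ∀ M : Submodule ℝ Y, IsClosed (M : Set Y) → ¬ FiniteDimensional ℝ M →
    ∃ N : Submodule ℝ Y, N ≤ M ∧ IsClosed (N : Set Y) ∧ ¬ FiniteDimensional ℝ N ∧
      ∃ P : Y →L[ℝ] Y, ‖P‖ ≤ lam ∧ LinearMap.range (P : Y →ₗ[ℝ] Y) = N ∧ ∀ y, P (P y) = P y

/-- A Banach space is λ-superprojective. -/
def Superprojective (lam : ℝ) (Y : Type*) [NormedAddCommGroup Y] [NormedSpace ℝ Y] : Prop :=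
  ∀ M : Submodule ℝ Y, IsClosed (M : Set Y) → ¬ FiniteDimensional ℝ (Y ⧸ M) →
    ∃ N : Submodule ℝ Y, M ≤ N ∧ IsClosed (N : Set Y) ∧ ¬ FiniteDimensional ℝ (Y ⧸ N) ∧
      ∃ P : Y →L[ℝ] Y, ‖P‖ ≤ lam ∧ LinearMap.range (P : Y →ₗ[ℝ] Y) = N ∧ ∀ y, P (P y) = P y

end


noncomputable section AuxStmt12
open NormedSpace Metric Set Filter Topology

variable {Y : Type*} [NormedAddCommGroup Y] [NormedSpace ℝ Y] (M : Submodule ℝ Y)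

abbrev nsSub : NormedSpace ℝ M := Submodule.normedSpace M

attribute [local instance] nsSub

/-- restriction of functionals to the subspace -/
def iS : StrongDual ℝ Y →L[ℝ] StrongDual ℝ M := adjOp M.subtypeL

lemma iS_apply (G : StrongDual ℝ Y) (m : M) : iS M G m = G m := rfl

/-- a chosen norm-preserving Hahn-Banach extension -/
def extD (g : StrongDual ℝ M) : StrongDual ℝ Y := (exists_extension_norm_eq M g).choose

lemma extD_eq (g : StrongDual ℝ M) (m : M) : extD M g m = g m :=
  (exists_extension_norm_eq M g).choose_spec.1 m

lemma extD_norm (g : StrongDual ℝ M) : ‖extD M g‖ = ‖g‖ :=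
  (exists_extension_norm_eq M g).choose_spec.2

lemma iS_extD (g : StrongDual ℝ M) : iS M (extD M g) = g := by
  ext m; rw [iS_apply, extD_eq]

lemma iS_norm_le : ‖iS M‖ ≤ 1 := by
  refine ContinuousLinearMap.opNorm_le_bound _ zero_le_one fun G => ?_
  rw [one_mul]
  exact ContinuousLinearMap.opNorm_le_bound _ (norm_nonneg G) fun m => G.le_opNorm m

lemma norm_comp_iS (σ : StrongDual ℝ (StrongDual ℝ M)) : ‖σ.comp (iS M)‖ = ‖σ‖ := by
  refine le_antisymm ?_ ?_
  · calc ‖σ.comp (iS M)‖ ≤ ‖σ‖ * ‖iS M‖ := ContinuousLinearMap.opNorm_comp_le _ _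
    _ ≤ ‖σ‖ * 1 := mul_le_mul_of_nonneg_left (iS_norm_le M) (norm_nonneg σ)
    _ = ‖σ‖ := mul_one _
  · refine ContinuousLinearMap.opNorm_le_bound _ (norm_nonneg (σ.comp (iS M))) fun g => ?_
    have h : σ g = σ.comp (iS M) (extD M g) := by
      rw [ContinuousLinearMap.comp_apply, iS_extD]
    rw [h, ← extD_norm M g]
    exact (σ.comp (iS M)).le_opNorm _

lemma comp_iS_inclusion (m : M) :
    (inclusionInDoubleDual ℝ M m).comp (iS M) = inclusionInDoubleDual ℝ Y (m : Y) := by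
  ext G; rfl

variable {M} in
/-- lift of a bidual element vanishing on the annihilator of `M` -/
def liftPsi (φ : StrongDual ℝ (StrongDual ℝ Y)) (hφ : ∀ f : StrongDual ℝ Y, (∀ m : M, f m = 0) → φ f = 0) :
    StrongDual ℝ (StrongDual ℝ M) :=
  LinearMap.mkContinuous
    { toFun := fun g => φ (extD M g)
      map_add' := by
        intro g g'
        have h0 : φ (extD M (g + g') - extD M g - extD M g') = 0 := by
          refine hφ _ fun m => ?_
          simp [extD_eq]
        simp only [map_sub] at h0
        linarith
      map_smul' := by
        intro c g
        have h0 : φ (extD M (c • g) - c • extD M g) = 0 := by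
          refine hφ _ fun m => ?_
          simp [extD_eq]
        simp only [map_sub, map_smul] at h0
        simpa [sub_eq_zero] using h0 }
    ‖φ‖ (fun g => by
      simp only [LinearMap.coe_mk, AddHom.coe_mk]
      calc ‖φ (extD M g)‖ ≤ ‖φ‖ * ‖extD M g‖ := φ.le_opNorm _
      _ = ‖φ‖ * ‖g‖ := by rw [extD_norm])

variable {M} in
lemma liftPsi_apply (φ : StrongDual ℝ (StrongDual ℝ Y)) (hφ) (g : StrongDual ℝ M) :
    liftPsi φ hφ g = φ (extD M g) := rfl

variable {M} in
lemma liftPsi_comp (φ : StrongDual ℝ (StrongDual ℝ Y))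
    (hφ : ∀ f : StrongDual ℝ Y, (∀ m : M, f m = 0) → φ f = 0) :
    (liftPsi φ hφ).comp (iS M) = φ := by
  ext G
  have h0 : φ (extD M (iS M G) - G) = 0 := by
    refine hφ _ fun m => ?_
    simp [extD_eq, iS_apply]
  simp only [map_sub] at h0
  have h : liftPsi φ hφ (iS M G) = φ (extD M (iS M G)) := rfl
  rw [ContinuousLinearMap.comp_apply, h]
  linarith

lemma infDist_le_of_vanishing (hM : IsClosed (M : Set Y)) (φ : StrongDual ℝ (StrongDual ℝ Y))
    (hφ : ∀ f : StrongDual ℝ Y, (∀ m : M, f m = 0) → φ f = 0) (y : Y) :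
    Metric.infDist y (M : Set Y) ≤ ‖φ - inclusionInDoubleDual ℝ Y y‖ := by
  haveI := hM
  set Qc : Y →L[ℝ] Y ⧸ M :=
    M.mkQ.mkContinuous 1 (fun z => by simpa using Submodule.Quotient.norm_mk_le M z) with hQc
  have hQnorm : ∀ z : Y, ‖Qc z‖ = Metric.infDist z (M : Set Y) := fun z =>
    QuotientAddGroup.norm_mk (S := M.toAddSubgroup) z
  by_cases hy : Qc y = 0
  · rw [← hQnorm y, hy, norm_zero]; exact norm_nonneg (φ - inclusionInDoubleDual ℝ Y y)
  · obtain ⟨g, hg1, hgy⟩ := exists_dual_vector ℝ (Qc y) (norm_ne_zero_iff.2 hy)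
    set f := g.comp Qc with hf
    have hfM : ∀ m : M, f (m : Y) = 0 := by
      intro m
      have h : Qc (m : Y) = 0 := (Submodule.Quotient.mk_eq_zero M).2 m.2
      simp [hf, h]
    have hfy : f y = Metric.infDist y (M : Set Y) := by
      rw [← hQnorm y]
      simpa [hf] using hgy
    have hfn : ‖f‖ ≤ 1 := by
      calc ‖f‖ ≤ ‖g‖ * ‖Qc‖ := ContinuousLinearMap.opNorm_comp_le _ _
      _ ≤ 1 * 1 := by
          refine mul_le_mul ?_ ?_ (norm_nonneg Qc) zero_le_one
          · exact le_of_eq hg1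
          · exact M.mkQ.mkContinuous_norm_le zero_le_one _
      _ = 1 := one_mul 1
    have key : f y = (inclusionInDoubleDual ℝ Y y - φ) f := by
      simp [inclusionInDoubleDual, hφ f hfM]
    calc Metric.infDist y (M : Set Y) = f y := hfy.symm
    _ = (inclusionInDoubleDual ℝ Y y - φ) f := key
    _ ≤ ‖(inclusionInDoubleDual ℝ Y y - φ) f‖ := le_abs_self _
    _ ≤ ‖inclusionInDoubleDual ℝ Y y - φ‖ * ‖f‖ := ContinuousLinearMap.le_opNorm _ _
    _ ≤ ‖inclusionInDoubleDual ℝ Y y - φ‖ * 1 := mul_le_mul_of_nonneg_left hfn (norm_nonneg (inclusionInDoubleDual ℝ Y y - φ))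
    _ = ‖φ - inclusionInDoubleDual ℝ Y y‖ := by rw [mul_one]; exact norm_sub_rev (inclusionInDoubleDual ℝ Y y) φ

/-- the bidual of the inclusion, on weak-star duals -/
def eW : WeakDual ℝ (StrongDual ℝ M) → WeakDual ℝ (StrongDual ℝ Y) :=
  fun χ => StrongDual.toWeakDual ((StrongDual.toWeakDual.symm χ).comp (iS M))

lemma eW_apply (χ : WeakDual ℝ (StrongDual ℝ M)) (G : StrongDual ℝ Y) : eW M χ G = χ (iS M G) := rfl

lemma eW_continuous : Continuous (eW M) :=
  WeakDual.continuous_of_continuous_eval fun G => WeakDual.eval_continuous (iS M G)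

lemma eW_injective : Function.Injective (eW M) := by
  intro χ χ' h
  have h2 : ∀ g : StrongDual ℝ M, χ g = χ' g := by
    intro g
    have h1 := congrArg (fun ρ : WeakDual ℝ (StrongDual ℝ Y) => ρ (extD M g)) h
    simpa [eW_apply, iS_extD] using h1
  apply DFunLike.ext _ _ h2

lemma eW_toWeakDual (ψ : StrongDual ℝ (StrongDual ℝ M)) :
    eW M (StrongDual.toWeakDual ψ) = StrongDual.toWeakDual (ψ.comp (iS M)) := rfl

lemma eW_incl (a : M) :
    eW M (StrongDual.toWeakDual (inclusionInDoubleDual ℝ M a)) =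
      StrongDual.toWeakDual (inclusionInDoubleDual ℝ Y (a : Y)) := by
  apply DFunLike.ext
  intro G
  rfl

lemma image_eW (A : Set M) :
    StrongDual.toWeakDual '' (inclusionInDoubleDual ℝ Y '' (Subtype.val '' A)) =
      eW M '' (StrongDual.toWeakDual '' (inclusionInDoubleDual ℝ M '' A)) := by
  rw [Set.image_image, Set.image_image, Set.image_image, Set.image_image]
  exact Set.image_congr fun a _ => (eW_incl M a).symm

lemma closure_pullback (A : Set M) (φ : StrongDual ℝ (StrongDual ℝ Y)) (ψ : StrongDual ℝ (StrongDual ℝ M))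
    (hval : ∀ g : StrongDual ℝ M, ψ g = φ (extD M g))
    (hmem : StrongDual.toWeakDual φ ∈
      closure (StrongDual.toWeakDual '' (inclusionInDoubleDual ℝ Y '' (Subtype.val '' A)))) :
    StrongDual.toWeakDual ψ ∈
      closure (StrongDual.toWeakDual '' (inclusionInDoubleDual ℝ M '' A)) := by
  set SM : Set (WeakDual ℝ (StrongDual ℝ M)) :=
    StrongDual.toWeakDual '' (inclusionInDoubleDual ℝ M '' A) with hSM
  have himg : StrongDual.toWeakDual '' (inclusionInDoubleDual ℝ Y '' (Subtype.val '' A)) =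
      eW M '' SM := image_eW M A
  rw [mem_closure_iff_ultrafilter] at hmem ⊢
  rw [himg] at hmem
  obtain ⟨u, huS, hunhds⟩ := hmem
  have hrange : Set.range (eW M) ∈ u :=
    Filter.mem_of_superset huS (Set.image_subset_range _ _)
  set v := u.comap (eW_injective M) hrange with hv
  refine ⟨v, ?_, ?_⟩
  · rw [Ultrafilter.mem_comap]
    exact huS
  · have h1 : Tendsto (eW M) ↑v ↑u := by
      rw [hv, Ultrafilter.coe_comap]; exact tendsto_comap
    have h2 : Tendsto (eW M) ↑v (𝓝 (StrongDual.toWeakDual φ)) := h1.mono_right hunhds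
    have h3 : ∀ g : StrongDual ℝ M,
        Tendsto (fun χ : WeakDual ℝ (StrongDual ℝ M) => χ g) ↑v (𝓝 (ψ g)) := by
      intro g
      have h4 : Tendsto (fun ρ : WeakDual ℝ (StrongDual ℝ Y) => ρ (extD M g))
          (𝓝 (StrongDual.toWeakDual φ)) (𝓝 (φ (extD M g))) :=
        (WeakDual.eval_continuous (extD M g)).tendsto _
      have h5 := h4.comp h2
      have heq : (fun χ : WeakDual ℝ (StrongDual ℝ M) => χ g) =
          (fun ρ : WeakDual ℝ (StrongDual ℝ Y) => ρ (extD M g)) ∘ eW M := by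
        funext χ
        simp only [Function.comp_apply, eW_apply, iS_extD]
      rw [heq, hval g]
      exact h5
    rw [← tendsto_id']
    exact (WeakBilin.tendsto_iff_forall_eval_tendsto _
      ContinuousLinearMap.coe_injective).2 fun g => h3 g

lemma wkkSet_bound {Z : Type*} [NormedAddCommGroup Z] [NormedSpace ℝ Z]
    (A : Set Z) (C : ℝ) (hC0 : 0 ≤ C) (hC : ∀ a ∈ A, ‖a‖ ≤ C) :
    ∀ r ∈ { r : ℝ | ∃ φ : StrongDual ℝ (StrongDual ℝ Z),
      StrongDual.toWeakDual φ ∈ closure (StrongDual.toWeakDual '' (inclusionInDoubleDual ℝ Z '' A)) ∧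
      r = Metric.infDist φ (Set.range (inclusionInDoubleDual ℝ Z)) }, r ≤ C := by
  rintro r ⟨φ, hmem, rfl⟩
  have hφn : ‖φ‖ ≤ C := by
    set D : Set (WeakDual ℝ (StrongDual ℝ Z)) := {χ | ∀ G : StrongDual ℝ Z, ‖χ G‖ ≤ C * ‖G‖} with hD
    have hDclosed : IsClosed D := by
      have h : D = ⋂ G : StrongDual ℝ Z, {χ : WeakDual ℝ (StrongDual ℝ Z) | ‖χ G‖ ≤ C * ‖G‖} := by
        ext χ; simp [hD, Set.mem_iInter]
      rw [h]
      exact isClosed_iInter fun G =>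
        isClosed_le ((WeakDual.eval_continuous G).norm) continuous_const
    have hsub : StrongDual.toWeakDual '' (inclusionInDoubleDual ℝ Z '' A) ⊆ D := by
      rintro _ ⟨_, ⟨a, ha, rfl⟩, rfl⟩ G
      calc ‖(StrongDual.toWeakDual (inclusionInDoubleDual ℝ Z a)) G‖ = ‖G a‖ := rfl
      _ ≤ ‖G‖ * ‖a‖ := G.le_opNorm a
      _ ≤ ‖G‖ * C := mul_le_mul_of_nonneg_left (hC a ha) (norm_nonneg G)
      _ = C * ‖G‖ := mul_comm _ _
    have hmemD : StrongDual.toWeakDual φ ∈ D := closure_minimal hsub hDclosed hmem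
    exact ContinuousLinearMap.opNorm_le_bound _ hC0 fun G => hmemD G
  calc Metric.infDist φ (Set.range (inclusionInDoubleDual ℝ Z))
      ≤ dist φ (inclusionInDoubleDual ℝ Z 0) :=
        Metric.infDist_le_dist_of_mem (Set.mem_range_self 0)
  _ = ‖φ‖ := by rw [map_zero]; exact dist_zero_right φ
  _ ≤ C := hφn

end AuxStmt12


theorem stmt12 {Y : Type*} [NormedAddCommGroup Y] [NormedSpace ℝ Y] [CompleteSpace Y]
    (M : Submodule ℝ Y) (hM : IsClosed (M : Set Y)) (A : Set M)
    (hA : Bornology.IsBounded A) :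
    wkk Y (Subtype.val '' A) ≤ wkk M A ∧ wkk M A ≤ 2 * wkk Y (Subtype.val '' A) := by
  classical
  letI := nsSub M
  obtain ⟨C0, hC0⟩ := hA.exists_norm_le
  set C : ℝ := max C0 0 with hCdef
  have hC0' : (0:ℝ) ≤ C := le_max_right _ _
  have hCM : ∀ a ∈ A, ‖a‖ ≤ C := fun a ha => (hC0 a ha).trans (le_max_left _ _)
  have hCY : ∀ y ∈ Subtype.val '' A, ‖y‖ ≤ C := by
    rintro _ ⟨a, ha, rfl⟩
    exact hCM a ha
  set SM := { r : ℝ | ∃ φ : StrongDual ℝ (StrongDual ℝ ↥M),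
      StrongDual.toWeakDual φ ∈ closure (StrongDual.toWeakDual '' (inclusionInDoubleDual ℝ ↥M '' A)) ∧
      r = Metric.infDist φ (Set.range (inclusionInDoubleDual ℝ ↥M)) } with hSMdef
  set SY := { r : ℝ | ∃ φ : StrongDual ℝ (StrongDual ℝ Y),
      StrongDual.toWeakDual φ ∈ closure (StrongDual.toWeakDual ''
        (inclusionInDoubleDual ℝ Y '' (Subtype.val '' A))) ∧
      r = Metric.infDist φ (Set.range (inclusionInDoubleDual ℝ Y)) } with hSYdef
  have hwM : wkk ↥M A = sSup SM := rfl
  have hwY : wkk Y (Subtype.val '' A) = sSup SY := rfl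
  have hbddM : BddAbove SM := ⟨C, fun r hr => wkkSet_bound A C hC0' hCM r hr⟩
  have hbddY : BddAbove SY := ⟨C, fun r hr => wkkSet_bound _ C hC0' hCY r hr⟩
  have hnonnegM : (0:ℝ) ≤ sSup SM := Real.sSup_nonneg (by
    rintro r ⟨φ, _, rfl⟩; exact Metric.infDist_nonneg)
  have hnonnegY : (0:ℝ) ≤ sSup SY := Real.sSup_nonneg (by
    rintro r ⟨φ, _, rfl⟩; exact Metric.infDist_nonneg)
  constructor
  · -- wkk Y ≤ wkk M
    rw [hwY, hwM]
    refine Real.sSup_le ?_ hnonnegM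
    rintro r ⟨φ, hmem, rfl⟩
    have hvan : ∀ f : StrongDual ℝ Y, (∀ m : M, f m = 0) → φ f = 0 := by
      intro f hf
      have hcl : IsClosed {χ : WeakDual ℝ (StrongDual ℝ Y) | χ f = 0} :=
        isClosed_eq (WeakDual.eval_continuous f) continuous_const
      have hsub : StrongDual.toWeakDual '' (inclusionInDoubleDual ℝ Y '' (Subtype.val '' A)) ⊆
          {χ : WeakDual ℝ (StrongDual ℝ Y) | χ f = 0} := by
        rintro _ ⟨_, ⟨_, ⟨a, _, rfl⟩, rfl⟩, rfl⟩
        exact hf a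
      exact closure_minimal hsub hcl hmem
    set ψ := liftPsi φ hvan with hψ
    have hmemM : StrongDual.toWeakDual ψ ∈
        closure (StrongDual.toWeakDual '' (inclusionInDoubleDual ℝ ↥M '' A)) :=
      closure_pullback M A φ ψ (fun g => rfl) hmem
    have hle : Metric.infDist φ (Set.range (inclusionInDoubleDual ℝ Y)) ≤
        Metric.infDist ψ (Set.range (inclusionInDoubleDual ℝ ↥M)) := by
      refine le_of_forall_pos_le_add fun ε hε => ?_
      have hne : (Set.range (inclusionInDoubleDual ℝ ↥M)).Nonempty := ⟨_, Set.mem_range_self 0⟩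
      obtain ⟨_, ⟨m, rfl⟩, hm⟩ := (Metric.infDist_lt_iff hne).1
        (lt_add_of_pos_right _ hε)
      have heq : dist ψ (inclusionInDoubleDual ℝ ↥M m) =
          dist φ (inclusionInDoubleDual ℝ Y (m : Y)) := by
        rw [show dist ψ (inclusionInDoubleDual ℝ ↥M m) = ‖ψ - inclusionInDoubleDual ℝ ↥M m‖ from
            dist_eq_norm ψ (inclusionInDoubleDual ℝ ↥M m),
          show dist φ (inclusionInDoubleDual ℝ Y (m : Y)) = ‖φ - inclusionInDoubleDual ℝ Y (m : Y)‖ from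
            dist_eq_norm φ (inclusionInDoubleDual ℝ Y (m : Y)), ← norm_comp_iS M (ψ - inclusionInDoubleDual ℝ ↥M m),
          ContinuousLinearMap.sub_comp, comp_iS_inclusion, liftPsi_comp]
      calc Metric.infDist φ (Set.range (inclusionInDoubleDual ℝ Y))
          ≤ dist φ (inclusionInDoubleDual ℝ Y (m : Y)) :=
            Metric.infDist_le_dist_of_mem (Set.mem_range_self _)
      _ = dist ψ (inclusionInDoubleDual ℝ ↥M m) := heq.symm
      _ ≤ Metric.infDist ψ (Set.range (inclusionInDoubleDual ℝ ↥M)) + ε := hm.le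
    exact hle.trans (le_csSup hbddM ⟨ψ, hmemM, rfl⟩)
  · -- wkk M ≤ 2 * wkk Y
    rw [hwY, hwM]
    refine Real.sSup_le ?_ (by linarith)
    rintro r ⟨ψ, hmem, rfl⟩
    set φ := ψ.comp (iS M) with hφdef
    have hvan : ∀ f : StrongDual ℝ Y, (∀ m : M, f m = 0) → φ f = 0 := by
      intro f hf
      have h0 : iS M f = 0 := by
        ext m; rw [iS_apply]; exact hf m
      rw [hφdef, ContinuousLinearMap.comp_apply, h0, map_zero]
    have hmemY : StrongDual.toWeakDual φ ∈ closure (StrongDual.toWeakDual ''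
        (inclusionInDoubleDual ℝ Y '' (Subtype.val '' A))) := by
      rw [image_eW M A]
      have h1 : eW M (StrongDual.toWeakDual ψ) ∈
          eW M '' closure (StrongDual.toWeakDual '' (inclusionInDoubleDual ℝ ↥M '' A)) :=
        Set.mem_image_of_mem _ hmem
      have h2 := image_closure_subset_closure_image (s :=
        StrongDual.toWeakDual '' (inclusionInDoubleDual ℝ ↥M '' A)) (eW_continuous M)
      exact h2 h1
    have key : Metric.infDist ψ (Set.range (inclusionInDoubleDual ℝ ↥M)) ≤
        2 * Metric.infDist φ (Set.range (inclusionInDoubleDual ℝ Y)) := by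
      refine le_of_forall_pos_le_add fun ε hε => ?_
      set d := Metric.infDist φ (Set.range (inclusionInDoubleDual ℝ Y)) with hd
      have hne : (Set.range (inclusionInDoubleDual ℝ Y)).Nonempty := ⟨_, Set.mem_range_self 0⟩
      obtain ⟨_, ⟨y, rfl⟩, hy⟩ := (Metric.infDist_lt_iff hne).1
        (lt_add_of_pos_right d (by linarith : (0:ℝ) < ε/4))
      have hdy : Metric.infDist y (M : Set Y) < d + ε/2 := by
        have h1 : Metric.infDist y (M : Set Y) ≤ ‖φ - inclusionInDoubleDual ℝ Y y‖ :=
          infDist_le_of_vanishing M hM φ hvan y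
        have h2 : ‖φ - inclusionInDoubleDual ℝ Y y‖ < d + ε/4 := by
          exact (dist_eq_norm φ (inclusionInDoubleDual ℝ Y y)).symm.trans_lt hy
        linarith
      have hMne : ((M : Set Y)).Nonempty := ⟨0, M.zero_mem⟩
      obtain ⟨m, hmM, hm⟩ := (Metric.infDist_lt_iff hMne).1 hdy
      have heq : dist ψ (inclusionInDoubleDual ℝ ↥M ⟨m, hmM⟩) =
          dist φ (inclusionInDoubleDual ℝ Y m) := by
        rw [show dist ψ (inclusionInDoubleDual ℝ ↥M ⟨m, hmM⟩) =
            ‖ψ - inclusionInDoubleDual ℝ ↥M ⟨m, hmM⟩‖ from dist_eq_norm ψ (inclusionInDoubleDual ℝ ↥M ⟨m, hmM⟩),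
          show dist φ (inclusionInDoubleDual ℝ Y m) = ‖φ - inclusionInDoubleDual ℝ Y m‖ from
            dist_eq_norm φ (inclusionInDoubleDual ℝ Y m),
          ← norm_comp_iS M (ψ - inclusionInDoubleDual ℝ ↥M ⟨m, hmM⟩),
          ContinuousLinearMap.sub_comp, comp_iS_inclusion]
      have hiso : dist (inclusionInDoubleDual ℝ Y y) (inclusionInDoubleDual ℝ Y m) =
          dist y m := (inclusionInDoubleDualLi ℝ (E := Y)).isometry.dist_eq y m
      calc Metric.infDist ψ (Set.range (inclusionInDoubleDual ℝ ↥M))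
          ≤ dist ψ (inclusionInDoubleDual ℝ ↥M ⟨m, hmM⟩) :=
            Metric.infDist_le_dist_of_mem (Set.mem_range_self _)
      _ = dist φ (inclusionInDoubleDual ℝ Y m) := heq
      _ ≤ dist φ (inclusionInDoubleDual ℝ Y y) +
            dist (inclusionInDoubleDual ℝ Y y) (inclusionInDoubleDual ℝ Y m) :=
          dist_triangle _ _ _
      _ = dist φ (inclusionInDoubleDual ℝ Y y) + dist y m := by rw [hiso]
      _ ≤ (d + ε/4) + (d + ε/2) := add_le_add hy.le hm.le
      _ ≤ 2 * d + ε := by linarith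
    have hdle : Metric.infDist φ (Set.range (inclusionInDoubleDual ℝ Y)) ≤ sSup SY :=
      le_csSup hbddY ⟨φ, hmemY, rfl⟩
    linarith
end

section
/- Let Y be a λ-subprojective Banach space and T: X → Y a bounded operator. Then SS(T) ≤ λ·SS(T*), where SS(U) = sup over infinite-dimensional closed subspaces M of dom(U) of inf{‖Ux‖ : x ∈ M, ‖x‖=1}. -/
open NormedSpace Metric Set Filter
open scoped ENNReal

section Aux
open NormedSpace

variable {V : Type*} [NormedAddCommGroup V] [NormedSpace ℝ V]

lemma aux_unit (M : Submodule ℝ V) (h : ¬ FiniteDimensional ℝ M) :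
    ∃ x ∈ M, ‖x‖ = 1 := by
  have hne : M ≠ ⊥ := by
    rintro rfl
    exact h (by infer_instance)
  obtain ⟨x, hxM, hx0⟩ := (Submodule.ne_bot_iff M).mp hne
  have hnx : ‖x‖ ≠ 0 := norm_ne_zero_iff.mpr hx0
  refine ⟨‖x‖⁻¹ • x, M.smul_mem _ hxM, ?_⟩
  rw [norm_smul, norm_inv, norm_norm, inv_mul_cancel₀ hnx]

lemma aux_dual_infinite (h : ¬ FiniteDimensional ℝ V) :
    ¬ FiniteDimensional ℝ (StrongDual ℝ V) := by
  intro hfd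
  exact h (FiniteDimensional.of_injective (inclusionInDoubleDualLi ℝ (E := V)).toLinearMap
    (inclusionInDoubleDualLi ℝ (E := V)).injective)

end Aux

set_option maxHeartbeats 1000000 in
theorem stmt14 {X Y : Type*} [NormedAddCommGroup X] [NormedSpace ℝ X] [CompleteSpace X]
    [NormedAddCommGroup Y] [NormedSpace ℝ Y] [CompleteSpace Y] (lam : ℝ) (hlam : 1 ≤ lam) (hY : Subprojective lam Y)
    (T : X →L[ℝ] Y) : SS T ≤ lam * SS (adjOp T) := by
  have hlam0 : (0:ℝ) < lam := lt_of_lt_of_le one_pos hlam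
  have hSSnn : 0 ≤ SS (adjOp T) := by
    apply Real.sSup_nonneg
    rintro c ⟨M, -, -, rfl⟩
    apply Real.sInf_nonneg
    rintro r ⟨g, -, -, rfl⟩
    positivity
  refine Real.sSup_le ?_ (by positivity)
  rintro c ⟨M, hMcl, hMinf, rfl⟩
  set S : Set ℝ := {r : ℝ | ∃ x ∈ M, ‖x‖ = 1 ∧ r = ‖T x‖} with hS
  by_cases hc : sInf S ≤ 0
  · exact hc.trans (by positivity)
  push_neg at hc
  have hSbb : BddBelow S := ⟨0, by rintro r ⟨x, -, -, rfl⟩; positivity⟩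
  -- lower bound for T on M
  have hbound : ∀ x ∈ M, sInf S * ‖x‖ ≤ ‖T x‖ := by
    intro x hx
    rcases eq_or_ne x 0 with rfl | hx0
    · simp
    have hnx : (0:ℝ) < ‖x‖ := norm_pos_iff.mpr hx0
    have hu : ‖T (‖x‖⁻¹ • x)‖ ∈ S :=
      ⟨‖x‖⁻¹ • x, M.smul_mem _ hx,
        by rw [norm_smul, norm_inv, norm_norm, inv_mul_cancel₀ hnx.ne'], rfl⟩
    have h1 := csInf_le hSbb hu
    rw [map_smul, norm_smul, norm_inv, norm_norm] at h1
    rw [inv_mul_eq_div] at h1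
    exact (le_div_iff₀ hnx).mp h1
  -- the image submodule
  set MT : Submodule ℝ Y := Submodule.map (T : X →ₗ[ℝ] Y) M with hMT
  haveI : CompleteSpace M := hMcl.completeSpace_coe
  have hrange : Set.range (T.comp M.subtypeL) = (MT : Set Y) := by
    ext y
    simp only [Set.mem_range, ContinuousLinearMap.comp_apply, hMT, Submodule.map_coe,
      Set.mem_image, SetLike.mem_coe]
    constructor
    · rintro ⟨⟨x, hx⟩, rfl⟩; exact ⟨x, hx, rfl⟩
    · rintro ⟨x, hx, rfl⟩; exact ⟨⟨x, hx⟩, rfl⟩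
  have hbelow : ∀ m : M, ‖m‖ ≤ (⟨(sInf S)⁻¹, by positivity⟩ : NNReal) * ‖(T.comp M.subtypeL) m‖ := by
    intro m
    have := hbound m m.2
    have h2 : ‖(m : X)‖ ≤ (sInf S)⁻¹ * ‖T m‖ := by
      rw [le_inv_mul_iff₀ hc, mul_comm] at *
      exact this
    simpa using h2
  have hMTcl : IsClosed (MT : Set Y) := by
    rw [← hrange]
    exact ((T.comp M.subtypeL).antilipschitz_of_bound hbelow).isClosed_range
      (T.comp M.subtypeL).uniformContinuous
  have hMTinf : ¬ FiniteDimensional ℝ MT := by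
    intro hfd
    apply hMinf
    refine FiniteDimensional.of_injective
      (LinearMap.codRestrict MT (((T : X →ₗ[ℝ] Y)).comp M.subtype)
        (fun m => ⟨m, m.2, rfl⟩)) ?_
    intro a b hab
    have h3 : T (a : X) = T (b : X) := congrArg Subtype.val hab
    have h4 : T ((a : X) - (b : X)) = 0 := by rw [map_sub, h3, sub_self]
    have h5 := hbound ((a : X) - (b : X)) (M.sub_mem a.2 b.2)
    rw [h4, norm_zero] at h5
    have h6 : ‖(a : X) - (b : X)‖ = 0 := by nlinarith [norm_nonneg ((a : X) - (b : X))]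
    exact Subtype.ext (by rwa [← sub_eq_zero, ← norm_eq_zero])
  obtain ⟨N, hNle, hNcl, hNinf, P, hPnorm, hPrange, hPidem⟩ := hY MT hMTcl hMTinf
  -- P fixes N
  have hPfix : ∀ n ∈ N, P n = n := by
    intro n hn
    rw [← hPrange] at hn
    obtain ⟨y, rfl⟩ := hn
    exact hPidem y
  -- the dual subspace
  set Pstar : StrongDual ℝ Y →L[ℝ] StrongDual ℝ Y := (ContinuousLinearMap.compL ℝ Y Y ℝ).flip P with hPstar
  have hPstar_apply : ∀ (g : StrongDual ℝ Y) (y : Y), Pstar g y = g (P y) := fun g y => rfl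
  set Mstar : Submodule ℝ (StrongDual ℝ Y) :=
    LinearMap.ker ((Pstar - ContinuousLinearMap.id ℝ (StrongDual ℝ Y) : StrongDual ℝ Y →L[ℝ] StrongDual ℝ Y) : StrongDual ℝ Y →ₗ[ℝ] StrongDual ℝ Y) with hMstar
  have hMstar_mem : ∀ g : StrongDual ℝ Y, g ∈ Mstar ↔ ∀ y, g (P y) = g y := by
    intro g
    rw [hMstar, LinearMap.mem_ker]
    constructor
    · intro h y
      have := congrFun (congrArg DFunLike.coe h) y
      simpa [sub_eq_zero, hPstar_apply] using this
    · intro h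
      ext y
      simp [hPstar_apply, h y, sub_eq_zero]
  have hMstarcl : IsClosed (Mstar : Set (StrongDual ℝ Y)) := ContinuousLinearMap.isClosed_ker _
  -- Mstar is infinite dimensional
  have hMstarinf : ¬ FiniteDimensional ℝ Mstar := by
    intro hfd
    apply aux_dual_infinite hNinf
    set Pc : Y →L[ℝ] N := P.codRestrict N (fun y => by rw [← hPrange]; exact ⟨y, rfl⟩) with hPc
    have hPc_apply : ∀ y, ((Pc y : Y)) = P y := fun y => P.coe_codRestrict_apply _ _ _
    set J : StrongDual ℝ N →L[ℝ] StrongDual ℝ Y := (ContinuousLinearMap.compL ℝ Y N ℝ).flip Pc with hJ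
    have hJ_apply : ∀ (g : StrongDual ℝ N) (y : Y), J g y = g (Pc y) := fun g y => rfl
    have hJmem : ∀ g : StrongDual ℝ N, J g ∈ Mstar := by
      intro g
      rw [hMstar_mem]
      intro y
      rw [hJ_apply, hJ_apply]
      congr 1
      exact Subtype.ext (by rw [hPc_apply, hPc_apply, hPidem])
    refine FiniteDimensional.of_injective (V₂ := Mstar)
      (LinearMap.codRestrict Mstar (J : StrongDual ℝ N →ₗ[ℝ] StrongDual ℝ Y) hJmem) ?_
    intro a b hab
    have h3 : J a = J b := congrArg Subtype.val hab
    ext n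
    have h4 := congrFun (congrArg DFunLike.coe h3) (n : Y)
    rw [hJ_apply, hJ_apply] at h4
    have h5 : Pc (n : Y) = n := Subtype.ext (by rw [hPc_apply]; exact hPfix _ n.2)
    rwa [h5] at h4
  -- the key estimate
  have hkey : ∀ g ∈ Mstar, ‖g‖ ≤ lam / sInf S * ‖adjOp T g‖ := by
    intro g hg
    refine ContinuousLinearMap.opNorm_le_bound g (by positivity) ?_
    intro y
    rw [← (hMstar_mem g).mp hg y]
    have hPy : P y ∈ MT := hNle (hPrange ▸ LinearMap.mem_range_self _ y)
    obtain ⟨x, hx, hTx0⟩ := hPy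
    have hTx : T x = P y := hTx0
    rw [← hTx]
    have h1 : ‖g (T x)‖ ≤ ‖adjOp T g‖ * ‖x‖ := (adjOp T g).le_opNorm x
    have h2 : sInf S * ‖x‖ ≤ ‖T x‖ := hbound x hx
    have h3 : ‖T x‖ ≤ lam * ‖y‖ := by
      rw [hTx]
      calc ‖P y‖ ≤ ‖P‖ * ‖y‖ := P.le_opNorm y
        _ ≤ lam * ‖y‖ := by gcongr
    have h4 : ‖x‖ ≤ lam * ‖y‖ / sInf S := by
      rw [le_div_iff₀ hc]
      nlinarith
    calc ‖g (T x)‖ ≤ ‖adjOp T g‖ * ‖x‖ := h1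
      _ ≤ ‖adjOp T g‖ * (lam * ‖y‖ / sInf S) := by gcongr
      _ = lam / sInf S * ‖adjOp T g‖ * ‖y‖ := by ring
  -- conclude
  set Sstar : Set ℝ := {r : ℝ | ∃ g ∈ Mstar, ‖g‖ = 1 ∧ r = ‖adjOp T g‖} with hSstar
  have hSstar_ne : Sstar.Nonempty := by
    obtain ⟨g, hg, hg1⟩ := aux_unit Mstar hMstarinf
    exact ⟨‖adjOp T g‖, g, hg, hg1, rfl⟩
  have hc1 : sInf S / lam ≤ sInf Sstar := by
    refine le_csInf hSstar_ne ?_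
    rintro r ⟨g, hg, hg1, rfl⟩
    have := hkey g hg
    rw [hg1] at this
    rw [div_le_iff₀ hlam0]
    calc sInf S = sInf S * 1 := (mul_one _).symm
      _ ≤ sInf S * (lam / sInf S * ‖adjOp T g‖) := by gcongr
      _ = ‖adjOp T g‖ * lam := by field_simp
  have hbdd : BddAbove {c : ℝ | ∃ M' : Submodule ℝ (StrongDual ℝ Y), IsClosed (M' : Set (StrongDual ℝ Y)) ∧
      ¬ FiniteDimensional ℝ M' ∧
      c = sInf {r : ℝ | ∃ g ∈ M', ‖g‖ = 1 ∧ r = ‖adjOp T g‖}} := by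
    refine ⟨‖adjOp T‖, ?_⟩
    rintro c ⟨M', hcl', hinf', rfl⟩
    obtain ⟨g, hg, hg1⟩ := aux_unit M' hinf'
    refine csInf_le_of_le ⟨0, by rintro r ⟨g', -, -, rfl⟩; positivity⟩ ⟨g, hg, hg1, rfl⟩ ?_
    calc ‖adjOp T g‖ ≤ ‖adjOp T‖ * ‖g‖ := (adjOp T).le_opNorm g
      _ = ‖adjOp T‖ := by rw [hg1, mul_one]
  have hc2 : sInf Sstar ≤ SS (adjOp T) :=
    le_csSup hbdd ⟨Mstar, hMstarcl, hMstarinf, rfl⟩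
  calc sInf S = lam * (sInf S / lam) := by field_simp
    _ ≤ lam * sInf Sstar := by gcongr
    _ ≤ lam * SS (adjOp T) := by gcongr
end

section
/- Let X be a reflexive Banach space that is λ-subprojective. Then X* is (1+λ)-superprojective: for every infinite-codimensional closed subspace M of X*, there exists a closed subspace N ⊇ M of infinite codimension that is (1+λ)-complemented in X*. -/
open NormedSpace Metric Set Filter
open scoped ENNReal

section Aux

open NormedSpace

variable {X : Type*} [NormedAddCommGroup X] [NormedSpace ℝ X]

/-- The pre-annihilator of a subspace of the dual. -/
noncomputable def preAnn (M : Submodule ℝ (StrongDual ℝ X)) : Submodule ℝ X where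
  carrier := {x | ∀ f ∈ M, f x = 0}
  add_mem' := by intro a b ha hb f hf; simp [ha f hf, hb f hf]
  zero_mem' := by intro f _; simp
  smul_mem' := by intro c a ha f hf; simp [ha f hf]

lemma preAnn_isClosed (M : Submodule ℝ (StrongDual ℝ X)) : IsClosed ((preAnn M : Set X)) := by
  have : (preAnn M : Set X) = ⋂ f ∈ M, (f ⁻¹' {0} : Set X) := by
    ext x; simp [preAnn, Set.mem_iInter]
  rw [this]
  exact isClosed_biInter fun f _ => isClosed_singleton.preimage f.continuous

lemma mem_of_vanish_on_preAnn (hrefl : Function.Surjective (inclusionInDoubleDual ℝ X))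
    (M : Submodule ℝ (StrongDual ℝ X)) (hMcl : IsClosed (M : Set (StrongDual ℝ X)))
    (f : StrongDual ℝ X) (hf : ∀ x ∈ preAnn M, f x = 0) : f ∈ M := by
  by_contra hfM
  obtain ⟨φ, u, hu1, hu2⟩ := geometric_hahn_banach_closed_point (M.convex) hMcl hfM
  have hφ0 : ∀ g ∈ M, φ g = 0 := by
    intro g hg
    by_contra h0
    have ht : ((u + 1) / φ g) • g ∈ M := M.smul_mem _ hg
    have := hu1 _ ht
    rw [map_smul, smul_eq_mul, div_mul_cancel₀ _ h0] at this
    linarith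
  have hu0 : 0 < u := by simpa using hu1 0 M.zero_mem
  obtain ⟨x, hx⟩ := hrefl φ
  have hxMp : x ∈ preAnn M := by
    intro g hg
    have := hφ0 g hg
    rw [← hx] at this
    simpa [NormedSpace.dual_def] using this
  have hfx : f x = 0 := hf x hxMp
  have hφf : φ f = 0 := by rw [← hx]; simpa [NormedSpace.dual_def] using hfx
  rw [hφf] at hu2
  linarith

lemma quot_fd_of_preAnn_fd (hrefl : Function.Surjective (inclusionInDoubleDual ℝ X))
    (M : Submodule ℝ (StrongDual ℝ X)) (hMcl : IsClosed (M : Set (StrongDual ℝ X)))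
    (hfd : FiniteDimensional ℝ (preAnn M)) :
    FiniteDimensional ℝ (StrongDual ℝ X ⧸ M) := by
  let Φ : StrongDual ℝ X →ₗ[ℝ] (preAnn M →ₗ[ℝ] ℝ) :=
    { toFun := fun f => (f : X →ₗ[ℝ] ℝ).domRestrict (preAnn M)
      map_add' := by intro f g; ext x; rfl
      map_smul' := by intro c f; ext x; rfl }
  have hker : LinearMap.ker Φ ≤ M := by
    intro f hf
    apply mem_of_vanish_on_preAnn hrefl M hMcl
    intro x hx
    have h0 : Φ f = 0 := hf
    simpa [Φ] using LinearMap.congr_fun h0 ⟨x, hx⟩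
  haveI : FiniteDimensional ℝ (StrongDual ℝ X ⧸ LinearMap.ker Φ) :=
    Module.Finite.equiv (LinearMap.quotKerEquivRange Φ).symm
  have hsurj : Function.Surjective
      (Submodule.mapQ (LinearMap.ker Φ) M LinearMap.id hker) := by
    intro z
    obtain ⟨f, rfl⟩ := Submodule.Quotient.mk_surjective M z
    exact ⟨Submodule.Quotient.mk f, by simp [Submodule.mapQ_apply]⟩
  exact Module.Finite.of_surjective _ hsurj

end Aux

theorem stmt15 {X : Type*} [NormedAddCommGroup X] [NormedSpace ℝ X] [CompleteSpace X]
    (hrefl : Function.Surjective (inclusionInDoubleDual ℝ X))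
    (lam : ℝ) (hlam : 1 ≤ lam) (h : Subprojective lam X) :
    Superprojective (1 + lam) (StrongDual ℝ X) := by
  intro M hMcl hMfd
  have hMpfd : ¬ FiniteDimensional ℝ (preAnn M) := fun hf =>
    hMfd (quot_fd_of_preAnn_fd hrefl M hMcl hf)
  obtain ⟨N₀, hN₀le, hN₀cl, hN₀fd, P, hPnorm, hPrange, hPidem⟩ :=
    h (preAnn M) (preAnn_isClosed M) hMpfd
  have hadj : ∀ (f : StrongDual ℝ X) (x : X), adjOp P f x = f (P x) := fun f x => rfl
  -- points of N₀ are fixed by P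
  have hfix : ∀ x ∈ N₀, P x = x := by
    intro x hx
    rw [← hPrange] at hx
    obtain ⟨y, rfl⟩ := hx
    exact hPidem y
  set Q : StrongDual ℝ X →L[ℝ] StrongDual ℝ X := ContinuousLinearMap.id ℝ (StrongDual ℝ X) - adjOp P with hQ
  have hQapp : ∀ (f : StrongDual ℝ X) (x : X), Q f x = f x - f (P x) := by
    intro f x
    simp [hQ, ContinuousLinearMap.sub_apply, hadj]
  refine ⟨LinearMap.ker (adjOp P).toLinearMap, ?_, ?_, ?_, Q, ?_, ?_, ?_⟩
  · -- M ≤ ker (adjOp P)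
    intro f hf
    have : adjOp P f = 0 := by
      ext x
      have hPx : P x ∈ preAnn M := hN₀le (hPrange ▸ LinearMap.mem_range_self (P : X →ₗ[ℝ] X) x)
      simpa [hadj] using hPx f hf
    simpa [LinearMap.mem_ker] using this
  · -- closed
    exact ContinuousLinearMap.isClosed_ker (adjOp P)
  · -- infinite codimension
    intro hfd
    have hKle : ∀ x : N₀, LinearMap.ker (adjOp P).toLinearMap ≤
        LinearMap.ker ((inclusionInDoubleDual ℝ X (x : X)).toLinearMap) := by
      intro x f hf
      have h0 : adjOp P f = 0 := hf
      have : f (P (x : X)) = 0 := by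
        have := DFunLike.congr_fun h0 (x : X)
        simpa [hadj] using this
      simpa [NormedSpace.dual_def, hfix (x : X) x.2] using this
    let ψ : N₀ →ₗ[ℝ] ((StrongDual ℝ X ⧸ LinearMap.ker (adjOp P).toLinearMap) →ₗ[ℝ] ℝ) :=
      { toFun := fun x => Submodule.liftQ _ (inclusionInDoubleDual ℝ X (x : X)).toLinearMap
          (hKle x)
        map_add' := by
          intro a b
          ext z
          simp [Submodule.liftQ_apply, NormedSpace.dual_def]
        map_smul' := by
          intro c a
          ext z
          simp [Submodule.liftQ_apply, NormedSpace.dual_def] }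
    have hinj : Function.Injective ψ := by
      intro a b hab
      have h0 : ψ (a - b) = 0 := by rw [map_sub, hab, sub_self]
      have hz : ((a : X) - (b : X)) = 0 := by
        apply NormedSpace.eq_zero_of_forall_dual_eq_zero ℝ
        intro f
        have := LinearMap.congr_fun h0 (Submodule.Quotient.mk f)
        simpa [ψ, Submodule.liftQ_apply, NormedSpace.dual_def] using this
      exact Subtype.ext (sub_eq_zero.mp hz)
    haveI : FiniteDimensional ℝ N₀ := FiniteDimensional.of_injective ψ hinj
    exact hN₀fd this
  · -- norm bound
    have h1 : ‖Q‖ ≤ ‖ContinuousLinearMap.id ℝ (StrongDual ℝ X)‖ + ‖adjOp P‖ := by rw [hQ]; exact norm_sub_le (ContinuousLinearMap.id ℝ (StrongDual ℝ X)) (adjOp P)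
    have h2 : ‖adjOp P‖ ≤ ‖P‖ := by
      apply ContinuousLinearMap.opNorm_le_bound _ (norm_nonneg P)
      intro f
      calc ‖adjOp P f‖ = ‖f.comp P‖ := rfl
        _ ≤ ‖f‖ * ‖P‖ := ContinuousLinearMap.opNorm_comp_le f P
        _ = ‖P‖ * ‖f‖ := mul_comm _ _
    have h3 : ‖ContinuousLinearMap.id ℝ (StrongDual ℝ X)‖ ≤ 1 := ContinuousLinearMap.norm_id_le
    linarith
  · -- range Q = ker (adjOp P)
    apply le_antisymm
    · rintro _ ⟨g, rfl⟩
      have : adjOp P (Q g) = 0 := by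
        ext x
        simp [hadj, hQapp, hPidem x]
      simpa [LinearMap.mem_ker] using this
    · intro f hf
      have h0 : adjOp P f = 0 := hf
      refine ⟨f, ?_⟩
      ext x
      have := DFunLike.congr_fun h0 x
      simp [hQapp, hadj] at this ⊢
      simp [this]
  · -- idempotent
    intro f
    ext x
    have h1 := hPidem x
    simp [hQapp, h1]
end

section
/- Let X be a reflexive Banach space with X* λ-superprojective. Then X is (1+λ)-subprojective: every infinite-dimensional closed subspace of X contains an infinite-dimensional closed subspace that is (1+λ)-complemented in X. -/
open NormedSpace Metric Set Filter
open scoped ENNReal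

theorem sep_point {X : Type*} [NormedAddCommGroup X] [NormedSpace ℝ X]
    (M : Submodule ℝ X) (hM : IsClosed (M : Set X)) {x : X} (hx : x ∉ M) :
    ∃ f : StrongDual ℝ X, (∀ m ∈ M, f m = 0) ∧ f x ≠ 0 := by
  obtain ⟨f, u, hfs, hux⟩ := geometric_hahn_banach_closed_point M.convex hM hx
  have hM0 : ∀ m ∈ M, f m = 0 := by
    intro m hm
    by_contra hfm
    have hmem : ((u + 1) / f m) • m ∈ M := M.smul_mem _ hm
    have := hfs _ hmem
    rw [map_smul, smul_eq_mul, div_mul_cancel₀ _ hfm] at this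
    linarith
  refine ⟨f, hM0, ?_⟩
  have h0M := hfs 0 M.zero_mem
  rw [map_zero] at h0M
  intro hfx
  rw [hfx] at hux
  linarith

set_option maxHeartbeats 1000000 in
theorem stmt16 {X : Type*} [NormedAddCommGroup X] [NormedSpace ℝ X] [CompleteSpace X]
    (hrefl : Function.Surjective (inclusionInDoubleDual ℝ X))
    (lam : ℝ) (hlam : 1 ≤ lam) (h : Superprojective lam (StrongDual ℝ X)) :
    Subprojective (1 + lam) X := by
  intro M hMclosed hMinf
  -- the double-dual isometry equivalence
  set e : X ≃ₗᵢ[ℝ] StrongDual ℝ (StrongDual ℝ X) :=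
    LinearIsometryEquiv.ofSurjective (inclusionInDoubleDualLi ℝ) hrefl with he
  have he_apply : ∀ (x : X) (f : StrongDual ℝ X), e x f = f x := fun x f => rfl
  -- annihilator of M
  have hAclosed : IsClosed ((annih M : Submodule ℝ (StrongDual ℝ X)) : Set (StrongDual ℝ X)) := by
    have : ((annih M : Submodule ℝ (StrongDual ℝ X)) : Set (StrongDual ℝ X)) =
        ⋂ x ∈ M, {f : StrongDual ℝ X | f x = 0} := by
      ext f; simp [annih, Set.mem_iInter]
    rw [this]
    exact isClosed_biInter fun x _ =>
      isClosed_eq (ContinuousLinearMap.continuous (ContinuousLinearMap.apply ℝ ℝ x)) continuous_const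
  -- quotient by annih M is infinite dimensional
  have hAquot : ¬ FiniteDimensional ℝ (StrongDual ℝ X ⧸ (annih M)) := by
    intro hfin
    apply hMinf
    -- embed M into the dual of the quotient
    have hker : ∀ x : M, (annih M) ≤ LinearMap.ker
        (ContinuousLinearMap.apply ℝ ℝ (x : X) : StrongDual ℝ X →L[ℝ] ℝ).toLinearMap := by
      intro x f hf
      exact hf (x : X) x.2
    let Φ : M →ₗ[ℝ] Module.Dual ℝ (StrongDual ℝ X ⧸ (annih M)) :=
      { toFun := fun x => (annih M).liftQ
          (ContinuousLinearMap.apply ℝ ℝ (x : X) : StrongDual ℝ X →L[ℝ] ℝ).toLinearMap (hker x)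
        map_add' := by
          intro x y
          ext ⟨f⟩
          simp [Submodule.liftQ_apply]
        map_smul' := by
          intro c x
          ext ⟨f⟩
          simp [Submodule.liftQ_apply] }
    have hΦinj : Function.Injective Φ := by
      intro x y hxy
      have : ∀ f : StrongDual ℝ X, f (x : X) = f (y : X) := by
        intro f
        have := congrArg (fun g => g (Submodule.Quotient.mk f)) hxy
        simpa [Φ, Submodule.liftQ_apply] using this
      ext
      exact (NormedSpace.eq_iff_forall_dual_eq ℝ).2 this
    exact FiniteDimensional.of_injective Φ hΦinj
  obtain ⟨N, hAN, hNclosed, hNquot, P, hPnorm, hPrange, hPidem⟩ := h (annih M) hAclosed hAquot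
  have hPfix : ∀ f ∈ N, P f = f := by
    intro f hf
    rw [← hPrange] at hf
    obtain ⟨g, rfl⟩ := hf
    exact hPidem g
  -- the projection on X
  let Q : X →L[ℝ] X :=
    (e.symm.toLinearIsometry.toContinuousLinearMap).comp
      ((adjOp P).comp (e.toLinearIsometry.toContinuousLinearMap))
  have hQkey : ∀ (x : X) (f : StrongDual ℝ X), f (Q x) = P f x := by
    intro x f
    have h1 : e (Q x) = (adjOp P) (e x) := by
      simp only [Q, ContinuousLinearMap.comp_apply,
        LinearIsometry.coe_toContinuousLinearMap, LinearIsometryEquiv.coe_toLinearIsometry]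
      exact e.apply_symm_apply _
    have h2 : e (Q x) f = f (Q x) := rfl
    have h3 : (adjOp P) (e x) f = e x (P f) := rfl
    rw [← h2, h1, h3, he_apply]
  have hQnorm : ‖Q‖ ≤ lam := by
    apply ContinuousLinearMap.opNorm_le_bound _ (le_trans zero_le_one hlam)
    intro x
    have h1 : ‖Q x‖ = ‖(adjOp P) (e x)‖ := by
      simp only [Q, ContinuousLinearMap.comp_apply,
        LinearIsometry.coe_toContinuousLinearMap, LinearIsometryEquiv.coe_toLinearIsometry]
      exact e.symm.norm_map _
    have h2 : (adjOp P) (e x) = (e x).comp P := rfl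
    have h3 : ‖(e x).comp P‖ ≤ ‖e x‖ * ‖P‖ := ContinuousLinearMap.opNorm_comp_le _ _
    have h4 : ‖e x‖ = ‖x‖ := e.norm_map x
    calc ‖Q x‖ ≤ ‖x‖ * ‖P‖ := by rw [h1, h2]; rw [h4] at h3; exact h3
      _ ≤ ‖x‖ * lam := by
          apply mul_le_mul_of_nonneg_left hPnorm (norm_nonneg x)
      _ = lam * ‖x‖ := mul_comm _ _
  have hQidem : ∀ x, Q (Q x) = Q x := by
    intro x
    apply (NormedSpace.eq_iff_forall_dual_eq ℝ).2
    intro f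
    rw [hQkey, hQkey, hQkey, ← ContinuousLinearMap.comp_apply]
    congr 1
    exact hPidem f
  -- the projection R = id - Q
  let R : X →L[ℝ] X := ContinuousLinearMap.id ℝ X - Q
  have hR_apply : ∀ x, R x = x - Q x := fun x => rfl
  have hfR : ∀ (f : StrongDual ℝ X) (x : X), f (R x) = f x - P f x := by
    intro f x
    rw [hR_apply, map_sub, hQkey]
  have hRM : ∀ x, R x ∈ M := by
    intro x
    by_contra hxM
    obtain ⟨f, hf0, hfx⟩ := sep_point M hMclosed hxM
    have hfA : f ∈ annih M := hf0
    have hfN : f ∈ N := hAN hfA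
    have := hfR f x
    rw [hPfix f hfN, sub_self] at this
    exact hfx this
  have hQR : ∀ x, Q (R x) = 0 := by
    intro x
    rw [hR_apply, map_sub, hQidem, sub_self]
  have hRidem : ∀ x, R (R x) = R x := by
    intro x
    rw [hR_apply (R x), hQR, sub_zero]
  have hRrangeSet : (LinearMap.range (R : X →ₗ[ℝ] X) : Set X) = Q ⁻¹' {0} := by
    ext x
    constructor
    · rintro ⟨y, rfl⟩
      exact hQR y
    · intro hx
      exact ⟨x, by rw [ContinuousLinearMap.coe_coe, hR_apply, hx, sub_zero]⟩
  refine ⟨LinearMap.range (R : X →ₗ[ℝ] X), ?_, ?_, ?_, R, ?_, rfl, hRidem⟩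
  · rintro x ⟨y, rfl⟩
    exact hRM y
  · rw [hRrangeSet]
    exact IsClosed.preimage Q.continuous isClosed_singleton
  · -- range R infinite dimensional
    intro hfin
    apply hNquot
    -- embed Dual X ⧸ N into Module.Dual ℝ (range R)
    let ψ : StrongDual ℝ X →ₗ[ℝ] Module.Dual ℝ (LinearMap.range (R : X →ₗ[ℝ] X)) :=
      { toFun := fun f => (f : X →ₗ[ℝ] ℝ).comp (LinearMap.range (R : X →ₗ[ℝ] X)).subtype
        map_add' := by intro f g; ext x; simp
        map_smul' := by intro c f; ext x; simp }
    have hkerψ : N ≤ LinearMap.ker ψ := by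
      intro f hf
      have : ∀ x : X, f (R x) = 0 := by
        intro x
        rw [hfR, hPfix f hf, sub_self]
      apply LinearMap.mem_ker.2
      ext ⟨y, hy⟩
      obtain ⟨x, rfl⟩ := hy
      exact this x
    have hker2 : LinearMap.ker ψ ≤ N := by
      intro f hf
      have hf0 : ∀ x : X, f (R x) = 0 := by
        intro x
        have := congrArg (fun g => g ⟨R x, ⟨x, rfl⟩⟩) (LinearMap.mem_ker.1 hf)
        simpa [ψ] using this
      have : P f = f := by
        ext x
        have := hf0 x
        rw [hfR] at this
        linarith
      rw [← hPrange]
      exact ⟨f, this⟩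
    let Φ : (StrongDual ℝ X ⧸ N) →ₗ[ℝ] Module.Dual ℝ (LinearMap.range (R : X →ₗ[ℝ] X)) := N.liftQ ψ hkerψ
    have hΦinj : Function.Injective Φ :=
      LinearMap.ker_eq_bot.1 (Submodule.ker_liftQ_eq_bot _ _ _ hker2)
    exact FiniteDimensional.of_injective Φ hΦinj
  · -- norm bound
    calc ‖R‖ ≤ ‖ContinuousLinearMap.id ℝ X‖ + ‖Q‖ := norm_sub_le _ _
      _ ≤ 1 + lam := add_le_add ContinuousLinearMap.norm_id_le hQnorm
end

section
/- Let X be a λ-superprojective Banach space and T: X → Y a bounded operator. Then SCS(T) ≤ (1+λ)·SCS(T*). -/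
open NormedSpace Metric Set Filter
open scoped ENNReal

section Aux

variable {X Y : Type*} [NormedAddCommGroup X] [NormedSpace ℝ X]
  [NormedAddCommGroup Y] [NormedSpace ℝ Y]

/-- Key construction: lift a functional vanishing on `T⁻¹N` through the quotient surjection. -/
theorem exists_dual_lift (T : X →L[ℝ] Y) (N : Submodule ℝ Y) (hNc : IsClosed (N : Set Y))
    (hsurj : Function.Surjective (fun x : X => (Submodule.Quotient.mk (T x) : Y ⧸ N)))
    {d : ℝ} (hd : 0 < d)
    (hcov : ∀ w : Y ⧸ N, ‖w‖ ≤ d → ∃ x : X, ‖x‖ ≤ 1 ∧ (Submodule.Quotient.mk (T x) : Y ⧸ N) = w)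
    (h : X →L[ℝ] ℝ) (hker : ∀ x : X, T x ∈ N → h x = 0) :
    ∃ g : StrongDual ℝ Y, adjOp T g = h ∧ ‖g‖ ≤ ‖h‖ / d := by
  set Sl : X →ₗ[ℝ] Y ⧸ N := N.mkQ.comp (T : X →ₗ[ℝ] Y) with hSl
  have hSlapp : ∀ x : X, Sl x = (Submodule.Quotient.mk (T x) : Y ⧸ N) := fun x => rfl
  have hSsurj : Function.Surjective Sl := hsurj
  have hKle : LinearMap.ker Sl ≤ LinearMap.ker (h : X →ₗ[ℝ] ℝ) := by
    intro x hx
    have : (Submodule.Quotient.mk (T x) : Y ⧸ N) = 0 := hx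
    have hTx : T x ∈ N := (Submodule.Quotient.mk_eq_zero N).1 this
    exact hker x hTx
  set e := Sl.quotKerEquivOfSurjective hSsurj with he
  set g0 : (Y ⧸ N) →ₗ[ℝ] ℝ :=
    ((LinearMap.ker Sl).liftQ (h : X →ₗ[ℝ] ℝ) hKle).comp e.symm.toLinearMap with hg0
  have hemk : ∀ x : X, e (Submodule.Quotient.mk x) = Sl x := by
    intro x; simp [he, LinearMap.quotKerEquivOfSurjective, LinearMap.quotKerEquivRange]
  have hg0S : ∀ x : X, g0 (Sl x) = h x := by
    intro x
    have : e.symm (Sl x) = Submodule.Quotient.mk x := by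
      rw [LinearEquiv.symm_apply_eq, hemk]
    simp [hg0, this, Submodule.liftQ_apply]
  have hbound : ∀ w : Y ⧸ N, ‖g0 w‖ ≤ (‖h‖ / d) * ‖w‖ := by
    intro w
    by_cases hw : ‖w‖ = 0
    · obtain ⟨y, rfl⟩ := Submodule.Quotient.mk_surjective N w
      have : y ∈ closure (N : Set Y) := (QuotientAddGroup.norm_mk_eq_zero_iff_mem_closure (S := N.toAddSubgroup) (m := y)).1 hw
      rw [hNc.closure_eq] at this
      have : (Submodule.Quotient.mk y : Y ⧸ N) = 0 := (Submodule.Quotient.mk_eq_zero N).2 this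
      simp [this, hw]
    · have hwp : 0 < ‖w‖ := lt_of_le_of_ne (norm_nonneg w) (Ne.symm hw)
      set t : ℝ := d / ‖w‖ with ht
      have htp : 0 < t := div_pos hd hwp
      have hnw' : ‖t • w‖ ≤ d := by
        rw [norm_smul, Real.norm_eq_abs, abs_of_pos htp, ht, div_mul_cancel₀ _ hw]
      obtain ⟨x, hx1, hx2⟩ := hcov (t • w) hnw'
      have hx2' : Sl x = t • w := hx2
      have h1 : g0 (t • w) = h x := by rw [← hx2', hg0S]
      have h2 : ‖g0 (t • w)‖ ≤ ‖h‖ := by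
        rw [h1]
        calc ‖h x‖ ≤ ‖h‖ * ‖x‖ := h.le_opNorm x
        _ ≤ ‖h‖ * 1 := by gcongr
        _ = ‖h‖ := mul_one _
      have h3 : g0 (t • w) = t * g0 w := by rw [map_smul]; rfl
      rw [h3, Real.norm_eq_abs, abs_mul, abs_of_pos htp] at h2
      rw [Real.norm_eq_abs]
      calc (|g0 w|) = (t * |g0 w|) * ‖w‖ / d := by
            rw [ht]; field_simp
      _ ≤ ‖h‖ * ‖w‖ / d := by gcongr
      _ = ‖h‖ / d * ‖w‖ := by ring
  set g1 := g0.mkContinuous (‖h‖ / d) hbound with hg1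
  have hg1norm : ‖g1‖ ≤ ‖h‖ / d :=
    g0.mkContinuous_norm_le (div_nonneg (norm_nonneg h) hd.le) hbound
  set mkC : Y →L[ℝ] Y ⧸ N := N.mkQ.mkContinuous 1 (fun y => by
    simpa using Submodule.Quotient.norm_mk_le N y) with hmkC
  refine ⟨g1.comp mkC, ?_, ?_⟩
  · ext x
    exact hg0S x
  · refine ContinuousLinearMap.opNorm_le_bound _ (div_nonneg (norm_nonneg h) hd.le) fun y => ?_
    have : ‖g1 (mkC y)‖ ≤ ‖g1‖ * ‖(Submodule.Quotient.mk y : Y ⧸ N)‖ := g1.le_opNorm _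
    calc ‖(g1.comp mkC) y‖ = ‖g1 (mkC y)‖ := rfl
    _ ≤ ‖g1‖ * ‖(Submodule.Quotient.mk y : Y ⧸ N)‖ := this
    _ ≤ (‖h‖ / d) * ‖y‖ :=
        mul_le_mul hg1norm (Submodule.Quotient.norm_mk_le N y) (norm_nonneg _)
          (div_nonneg (norm_nonneg h) hd.le)

theorem cov_le_norm (U : X →L[ℝ] Y) (N : Submodule ℝ Y) (hc : IsClosed (N : Set Y))
    (hfin : ¬ FiniteDimensional ℝ (Y ⧸ N)) {d : ℝ} (hd : 0 < d)
    (hcov : ∀ w : Y ⧸ N, ‖w‖ ≤ d → ∃ v : X, ‖v‖ ≤ 1 ∧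
      (Submodule.Quotient.mk (U v) : Y ⧸ N) = w) : d ≤ ‖U‖ := by
  have hnt : Nontrivial (Y ⧸ N) := by
    by_contra hn
    rw [not_nontrivial_iff_subsingleton] at hn
    exact hfin (Module.Finite.of_basis (Module.Basis.empty _ (ι := Empty)))
  obtain ⟨w0, hw0⟩ := exists_ne (0 : Y ⧸ N)
  have hw0n : 0 < ‖w0‖ := by
    rcases (norm_nonneg w0).lt_or_eq with h' | h'
    · exact h'
    · exfalso
      obtain ⟨y, rfl⟩ := Submodule.Quotient.mk_surjective N w0
      have : y ∈ closure (N : Set Y) := (QuotientAddGroup.norm_mk_eq_zero_iff_mem_closure (S := N.toAddSubgroup) (m := y)).1 h'.symm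
      rw [hc.closure_eq] at this
      exact hw0 ((Submodule.Quotient.mk_eq_zero N).2 this)
  set w : Y ⧸ N := (d / ‖w0‖) • w0 with hw
  have hwn : ‖w‖ = d := by
    rw [hw, norm_smul, Real.norm_eq_abs, abs_of_pos (div_pos hd hw0n),
      div_mul_cancel₀ _ hw0n.ne']
  obtain ⟨v, hv1, hv2⟩ := hcov w hwn.le
  calc d = ‖w‖ := hwn.symm
  _ = ‖(Submodule.Quotient.mk (U v) : Y ⧸ N)‖ := by rw [hv2]
  _ ≤ ‖U v‖ := Submodule.Quotient.norm_mk_le N _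
  _ ≤ ‖U‖ * ‖v‖ := U.le_opNorm v
  _ ≤ ‖U‖ * 1 := by gcongr
  _ = ‖U‖ := mul_one _


theorem quot_dual_infdim (P : X →L[ℝ] X) (hPi : ∀ x, P (P x) = P x)
    (M : Submodule ℝ X) (hPr : LinearMap.range (P : X →ₗ[ℝ] X) = M)
    (hMfin : ¬ FiniteDimensional ℝ (X ⧸ M)) :
    ¬ FiniteDimensional ℝ (StrongDual ℝ X ⧸ LinearMap.range (adjOp P : StrongDual ℝ X →ₗ[ℝ] StrongDual ℝ X)) := by
  intro hfin
  set Kp : Submodule ℝ X := LinearMap.ker (P : X →ₗ[ℝ] X) with hKp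
  set ρ : StrongDual ℝ X →L[ℝ] StrongDual ℝ Kp := adjOp Kp.subtypeL with hρ
  have hle : LinearMap.range (adjOp P : StrongDual ℝ X →ₗ[ℝ] StrongDual ℝ X) ≤ LinearMap.ker (ρ : StrongDual ℝ X →ₗ[ℝ] StrongDual ℝ Kp) := by
    rintro f ⟨g, rfl⟩
    rw [LinearMap.mem_ker]
    ext v
    show g (P (v : X)) = 0
    rw [show P (v : X) = 0 from v.2, map_zero]
  set ψ := (LinearMap.range (adjOp P : StrongDual ℝ X →ₗ[ℝ] StrongDual ℝ X)).liftQ (ρ : StrongDual ℝ X →ₗ[ℝ] StrongDual ℝ Kp) hle with hψ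
  have hψs : Function.Surjective ψ := by
    intro φ
    obtain ⟨g, hg, -⟩ := exists_extension_norm_eq Kp φ
    refine ⟨Submodule.Quotient.mk g, ?_⟩
    rw [hψ, Submodule.liftQ_apply]
    ext v
    exact hg v
  have h1 : FiniteDimensional ℝ (StrongDual ℝ Kp) := Module.Finite.of_surjective ψ hψs
  have h2 : FiniteDimensional ℝ Kp := by
    have hinj := (inclusionInDoubleDualLi ℝ (E := Kp)).injective
    exact FiniteDimensional.of_injective (inclusionInDoubleDualLi ℝ (E := Kp)).toLinearMap hinj
  set σ : Kp →ₗ[ℝ] X ⧸ M := M.mkQ.comp Kp.subtype with hσ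
  have hσs : Function.Surjective σ := by
    intro q
    obtain ⟨x, rfl⟩ := Submodule.Quotient.mk_surjective M q
    have hmem : x - P x ∈ Kp := by
      rw [hKp, LinearMap.mem_ker, ContinuousLinearMap.coe_coe, map_sub, hPi, sub_self]
    refine ⟨⟨x - P x, hmem⟩, ?_⟩
    have hPxM : P x ∈ M := hPr ▸ LinearMap.mem_range_self _ x
    show (Submodule.Quotient.mk (x - P x) : X ⧸ M) = Submodule.Quotient.mk x
    rw [Submodule.Quotient.eq]
    simpa using M.neg_mem hPxM
  exact hMfin (Module.Finite.of_surjective σ hσs)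

end Aux

theorem stmt17 {X Y : Type*} [NormedAddCommGroup X] [NormedSpace ℝ X] [CompleteSpace X]
    [NormedAddCommGroup Y] [NormedSpace ℝ Y] [CompleteSpace Y] (lam : ℝ) (hlam : 1 ≤ lam) (h : Superprojective lam X)
    (T : X →L[ℝ] Y) : SCS T ≤ (1 + lam) * SCS (adjOp T) := by
  have hlam0 : (0:ℝ) < 1 + lam := by linarith
  -- boundedness of the SCS(T*) defining set
  have hboundA : ∀ r ∈ { r : ℝ | ∃ N : Submodule ℝ (StrongDual ℝ X), IsClosed (N : Set (StrongDual ℝ X)) ∧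
      ¬ FiniteDimensional ℝ (StrongDual ℝ X ⧸ N) ∧
      Function.Surjective (fun g : StrongDual ℝ Y => (Submodule.Quotient.mk (adjOp T g) : StrongDual ℝ X ⧸ N)) ∧
      r = deltaQ (fun g : StrongDual ℝ Y => (Submodule.Quotient.mk (adjOp T g) : StrongDual ℝ X ⧸ N)) },
      r ≤ ‖adjOp T‖ := by
    rintro r ⟨N'', hc, hfin, hs, rfl⟩
    refine Real.sSup_le (fun d0 hd0 => cov_le_norm (adjOp T) N'' hc hfin hd0.1 hd0.2) (norm_nonneg (adjOp T))
  have hbddA : BddAbove { r : ℝ | ∃ N : Submodule ℝ (StrongDual ℝ X), IsClosed (N : Set (StrongDual ℝ X)) ∧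
      ¬ FiniteDimensional ℝ (StrongDual ℝ X ⧸ N) ∧
      Function.Surjective (fun g : StrongDual ℝ Y => (Submodule.Quotient.mk (adjOp T g) : StrongDual ℝ X ⧸ N)) ∧
      r = deltaQ (fun g : StrongDual ℝ Y => (Submodule.Quotient.mk (adjOp T g) : StrongDual ℝ X ⧸ N)) } :=
    ⟨‖adjOp T‖, hboundA⟩
  have hSCSnn : 0 ≤ SCS (adjOp T) := by
    apply Real.sSup_nonneg
    rintro r ⟨N'', hc, hfin, hs, rfl⟩
    exact Real.sSup_nonneg (fun d0 hd0 => hd0.1.le)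
  have hRHSnn : 0 ≤ (1 + lam) * SCS (adjOp T) := mul_nonneg hlam0.le hSCSnn
  apply Real.sSup_le _ hRHSnn
  rintro r ⟨N, hNc, hNfin, hNsurj, rfl⟩
  apply Real.sSup_le _ hRHSnn
  rintro d ⟨hd, hcov⟩
  -- the kernel K = T⁻¹(N)
  set Sl : X →ₗ[ℝ] Y ⧸ N := N.mkQ.comp (T : X →ₗ[ℝ] Y) with hSl
  set K : Submodule ℝ X := LinearMap.ker Sl with hK
  have hKset : (K : Set X) = T ⁻¹' (N : Set Y) := by
    ext x
    simp [hK, hSl, LinearMap.mem_ker, Submodule.Quotient.mk_eq_zero]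
  have hKc : IsClosed (K : Set X) := by
    rw [hKset]; exact hNc.preimage T.continuous
  have hKfin : ¬ FiniteDimensional ℝ (X ⧸ K) := by
    intro hf
    refine hNfin (Module.Finite.of_surjective (K.liftQ Sl le_rfl) ?_)
    intro q
    obtain ⟨x, hx⟩ := hNsurj q
    exact ⟨Submodule.Quotient.mk x, by rw [Submodule.liftQ_apply]; exact hx⟩
  obtain ⟨M, hKM, hMc, hMfin, P, hPn, hPr, hPi⟩ := h K hKc hKfin
  set N' : Submodule ℝ (StrongDual ℝ X) := LinearMap.range (adjOp P : StrongDual ℝ X →ₗ[ℝ] StrongDual ℝ X) with hN'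
  have hmemN' : ∀ f : StrongDual ℝ X, f ∈ N' ↔ adjOp P f = f := by
    intro f
    constructor
    · rintro ⟨g, rfl⟩
      ext x
      exact congrArg g (hPi x)
    · intro hf
      exact ⟨f, hf⟩
  have hN'c : IsClosed (N' : Set (StrongDual ℝ X)) := by
    have hset : (N' : Set (StrongDual ℝ X)) =
        (LinearMap.ker ((ContinuousLinearMap.id ℝ (StrongDual ℝ X) - adjOp P : StrongDual ℝ X →L[ℝ] StrongDual ℝ X) : StrongDual ℝ X →ₗ[ℝ] StrongDual ℝ X) : Set (StrongDual ℝ X)) := by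
      ext f
      simp only [SetLike.mem_coe, LinearMap.mem_ker, ContinuousLinearMap.coe_coe, ContinuousLinearMap.sub_apply,
        ContinuousLinearMap.id_apply, sub_eq_zero, hmemN' f]
      exact eq_comm
    rw [hset]
    exact ContinuousLinearMap.isClosed_ker _
  have hN'fin : ¬ FiniteDimensional ℝ (StrongDual ℝ X ⧸ N') :=
    quot_dual_infdim P hPi M hPr hMfin
  -- key existence
  have hmain : ∀ f : StrongDual ℝ X, ∃ g : StrongDual ℝ Y,
      adjOp T g = f - adjOp P f ∧ ‖g‖ ≤ (1 + lam) * ‖f‖ / d := by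
    intro f
    have hker : ∀ x : X, T x ∈ N → (f - adjOp P f) x = 0 := by
      intro x hx
      have hxK : x ∈ K := by
        rw [← SetLike.mem_coe, hKset]; exact hx
      have hxM : x ∈ M := hKM hxK
      obtain ⟨y, hy⟩ := hPr ▸ hxM
      have hPx : P x = x := by rw [← hy]; exact hPi y
      show f x - f (P x) = 0
      rw [hPx, sub_self]
    obtain ⟨g, hg1, hg2⟩ := exists_dual_lift T N hNc hNsurj hd hcov (f - adjOp P f) hker
    have hnorm : ‖f - adjOp P f‖ ≤ (1 + lam) * ‖f‖ := by
      refine ContinuousLinearMap.opNorm_le_bound _ (mul_nonneg hlam0.le (norm_nonneg f)) fun x => ?_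
      have h1 : (f - adjOp P f) x = f (x - P x) := by
        show f x - f (P x) = f (x - P x)
        rw [map_sub]
      rw [h1]
      calc ‖f (x - P x)‖ ≤ ‖f‖ * ‖x - P x‖ := f.le_opNorm _
      _ ≤ ‖f‖ * (‖x‖ + ‖P x‖) := by gcongr; exact norm_sub_le _ _
      _ ≤ ‖f‖ * (‖x‖ + lam * ‖x‖) := by
          gcongr
          calc ‖P x‖ ≤ ‖P‖ * ‖x‖ := P.le_opNorm x
          _ ≤ lam * ‖x‖ := by gcongr
      _ = (1 + lam) * ‖f‖ * ‖x‖ := by ring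
    refine ⟨g, hg1, hg2.trans ?_⟩
    gcongr
  -- surjectivity of the dual quotient map
  have hsurj' : Function.Surjective
      (fun g : StrongDual ℝ Y => (Submodule.Quotient.mk (adjOp T g) : StrongDual ℝ X ⧸ N')) := by
    intro q
    obtain ⟨f, rfl⟩ := Submodule.Quotient.mk_surjective N' q
    obtain ⟨g, hg1, -⟩ := hmain f
    refine ⟨g, ?_⟩
    show (Submodule.Quotient.mk (adjOp T g) : StrongDual ℝ X ⧸ N') = Submodule.Quotient.mk f
    rw [hg1, Submodule.Quotient.eq]
    have : f - adjOp P f - f = -(adjOp P f) := by abel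
    rw [this]
    exact N'.neg_mem ⟨f, rfl⟩
  -- r' belongs to the SCS(T*) defining set
  have hr'mem : deltaQ (fun g : StrongDual ℝ Y => (Submodule.Quotient.mk (adjOp T g) : StrongDual ℝ X ⧸ N')) ∈
      { r : ℝ | ∃ N0 : Submodule ℝ (StrongDual ℝ X), IsClosed (N0 : Set (StrongDual ℝ X)) ∧
        ¬ FiniteDimensional ℝ (StrongDual ℝ X ⧸ N0) ∧
        Function.Surjective (fun g : StrongDual ℝ Y => (Submodule.Quotient.mk (adjOp T g) : StrongDual ℝ X ⧸ N0)) ∧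
        r = deltaQ (fun g : StrongDual ℝ Y => (Submodule.Quotient.mk (adjOp T g) : StrongDual ℝ X ⧸ N0)) } :=
    ⟨N', hN'c, hN'fin, hsurj', rfl⟩
  have hr'le : deltaQ (fun g : StrongDual ℝ Y => (Submodule.Quotient.mk (adjOp T g) : StrongDual ℝ X ⧸ N'))
      ≤ SCS (adjOp T) := le_csSup hbddA hr'mem
  -- each d' < d / (1 + lam) is admissible
  have hD' : ∀ d' : ℝ, 0 < d' → d' < d / (1 + lam) →
      d' ≤ deltaQ (fun g : StrongDual ℝ Y => (Submodule.Quotient.mk (adjOp T g) : StrongDual ℝ X ⧸ N')) := by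
    intro d' hd'0 hd'lt
    have hbddD' : BddAbove { d0 : ℝ | 0 < d0 ∧ ∀ w : StrongDual ℝ X ⧸ N', ‖w‖ ≤ d0 →
        ∃ g : StrongDual ℝ Y, ‖g‖ ≤ 1 ∧ (Submodule.Quotient.mk (adjOp T g) : StrongDual ℝ X ⧸ N') = w } :=
      ⟨‖adjOp T‖, fun d0 hd0 => cov_le_norm (adjOp T) N' hN'c hN'fin hd0.1 hd0.2⟩
    refine le_csSup hbddD' ⟨hd'0, fun w hw => ?_⟩
    have hgap : (0:ℝ) < d / (1 + lam) - d' := by linarith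
    obtain ⟨f, hf1, hf2⟩ := Submodule.Quotient.norm_mk_lt w hgap
    have hfn : ‖f‖ < d / (1 + lam) := by linarith
    obtain ⟨g, hg1, hg2⟩ := hmain f
    refine ⟨g, ?_, ?_⟩
    · have hlt : (1 + lam) * ‖f‖ / d < 1 := by
        rw [div_lt_one hd]
        calc (1 + lam) * ‖f‖ < (1 + lam) * (d / (1 + lam)) := by gcongr
        _ = d := mul_div_cancel₀ d hlam0.ne'
      exact hg2.trans hlt.le
    · show (Submodule.Quotient.mk (adjOp T g) : StrongDual ℝ X ⧸ N') = w
      rw [hg1, ← hf1, Submodule.Quotient.eq]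
      have : f - adjOp P f - f = -(adjOp P f) := by abel
      rw [this]
      exact N'.neg_mem ⟨f, rfl⟩
  -- conclude
  have hfinal : d / (1 + lam) ≤ SCS (adjOp T) := by
    by_contra hcon
    push_neg at hcon
    set d' : ℝ := (SCS (adjOp T) + d / (1 + lam)) / 2 with hd'
    have h1 : SCS (adjOp T) < d' := by rw [hd']; linarith
    have h2 : d' < d / (1 + lam) := by rw [hd']; linarith
    have h3 : 0 < d' := lt_of_le_of_lt hSCSnn h1
    exact absurd ((hD' d' h3 h2).trans hr'le) (not_le.2 h1)
  calc d = (1 + lam) * (d / (1 + lam)) := (mul_div_cancel₀ d hlam0.ne').symm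
  _ ≤ (1 + lam) * SCS (adjOp T) := by gcongr
end

section
/- Let (x_n) be a basis for a Banach space X with coefficient functionals (x_n*), and (y_n) a semi-normalized weakly null sequence in X. Then for every ε > 0 there exist a subsequence (y_{k_n}) and a block basic sequence (z_n) with respect to (x_n) such that (1−ε)‖Σ a_i z_i‖ ≤ ‖Σ a_i y_{k_i}‖ ≤ (1+ε)‖Σ a_i z_i‖ for all finitely many scalars a_i. -/
open NormedSpace Metric Set Filter
open scoped ENNReal

section Stmt18Aux

/-- Recursively generated sequence of (kᵢ, pᵢ₊₁) states. -/
def stmt18St (F : ℕ → ℕ × ℕ → ℕ × ℕ) : ℕ → ℕ × ℕ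
  | 0 => F 0 (0, 0)
  | i + 1 => F (i + 1) (stmt18St F i)

/-- The p-sequence generated from the state sequence. -/
def stmt18P (F : ℕ → ℕ × ℕ → ℕ × ℕ) : ℕ → ℕ
  | 0 => 0
  | i + 1 => (stmt18St F i).2

end Stmt18Aux

theorem stmt18 {X : Type*} [NormedAddCommGroup X] [NormedSpace ℝ X] [CompleteSpace X] (x : ℕ → X) (xstar : ℕ → StrongDual ℝ X)
    (hbasis : ∀ v : X, ∃! a : ℕ → ℝ,
      Tendsto (fun n => ∑ i ∈ Finset.range n, a i • x i) atTop (nhds v))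
    (hcoeff : ∀ m n, xstar m (x n) = if m = n then 1 else 0)
    (y : ℕ → X) (c C : ℝ) (hc : 0 < c)
    (hy : ∀ n, c ≤ ‖y n‖ ∧ ‖y n‖ ≤ C)
    (hweak : ∀ f : StrongDual ℝ X, Tendsto (fun n => f (y n)) atTop (nhds 0))
    (ε : ℝ) (hε : 0 < ε) :
    ∃ k : ℕ → ℕ, StrictMono k ∧ ∃ p : ℕ → ℕ, StrictMono p ∧ ∃ b : ℕ → ℝ,
      ∀ (n : ℕ) (a : ℕ → ℝ),
        (1 - ε) * ‖∑ i ∈ Finset.range n,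
            a i • (∑ j ∈ Finset.Ioc (p i) (p (i + 1)), b j • x j)‖ ≤
          ‖∑ i ∈ Finset.range n, a i • y (k i)‖ ∧
        ‖∑ i ∈ Finset.range n, a i • y (k i)‖ ≤
          (1 + ε) * ‖∑ i ∈ Finset.range n,
            a i • (∑ j ∈ Finset.Ioc (p i) (p (i + 1)), b j • x j)‖ := by
  classical
  -- The partial-sum (basis projection) operators.
  set S : ℕ → X →L[ℝ] X := fun m => ∑ j ∈ Finset.range m, (xstar j).smulRight (x j) with hSdef
  have hSapply : ∀ m v, S m v = ∑ j ∈ Finset.range m, xstar j v • x j := by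
    intro m v
    simp [hSdef, ContinuousLinearMap.sum_apply]
  have hSx : ∀ m j, S m (x j) = if j < m then x j else 0 := by
    intro m j
    rw [hSapply]
    have h1 : ∀ j' ∈ Finset.range m, xstar j' (x j) • x j' = if j' = j then x j else 0 := by
      intro j' _
      rw [hcoeff]
      by_cases h : j' = j
      · subst h; simp
      · simp [h]
    rw [Finset.sum_congr rfl h1, Finset.sum_ite_eq']
    simp [Finset.mem_range]
  -- Coefficient identification: the partial sums with coefficients xstar j v converge to v.
  have hSto : ∀ v : X, Tendsto (fun m => S m v) atTop (nhds v) := by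
    intro v
    obtain ⟨a, ha, -⟩ := hbasis v
    have hax : ∀ j, a j = xstar j v := by
      intro j
      have h1 : Tendsto (fun n => xstar j (∑ i ∈ Finset.range n, a i • x i)) atTop
          (nhds (xstar j v)) := ((xstar j).continuous.tendsto v).comp ha
      have h2 : ∀ n, j < n → xstar j (∑ i ∈ Finset.range n, a i • x i) = a j := by
        intro n hn
        rw [map_sum]
        have h3 : ∀ i ∈ Finset.range n, xstar j (a i • x i) = if i = j then a i else 0 := by
          intro i _
          rw [map_smul, hcoeff]
          by_cases h : i = j
          · subst h; simp
          · simp [h, Ne.symm h]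
        rw [Finset.sum_congr rfl h3, Finset.sum_ite_eq']
        simp [Finset.mem_range.mpr hn]
      have h3 : Tendsto (fun n => xstar j (∑ i ∈ Finset.range n, a i • x i)) atTop (nhds (a j)) := by
        apply tendsto_const_nhds.congr'
        filter_upwards [eventually_gt_atTop j] with n hn
        exact (h2 n hn).symm
      exact tendsto_nhds_unique h3 h1
    have h4 : (fun m => S m v) = fun n => ∑ i ∈ Finset.range n, a i • x i := by
      funext m
      rw [hSapply]
      exact Finset.sum_congr rfl fun i _ => by rw [hax i]
    rw [h4]; exact ha
  -- Uniform bound on the projections (Banach–Steinhaus).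
  obtain ⟨K₀, hK₀⟩ : ∃ K₀, ∀ m, ‖S m‖ ≤ K₀ := by
    apply banach_steinhaus
    intro v
    obtain ⟨Cb, hCb⟩ := ((hSto v).norm).bddAbove_range
    exact ⟨Cb, fun m => hCb ⟨m, rfl⟩⟩
  set K : ℝ := max K₀ 1 with hKdef
  have hK1 : (1 : ℝ) ≤ K := le_max_right _ _
  have hKpos : (0 : ℝ) < K := lt_of_lt_of_le one_pos hK1
  have hK : ∀ m, ‖S m‖ ≤ K := fun m => (hK₀ m).trans (le_max_left _ _)
  -- Constants.
  set ε' : ℝ := min ε (1 / 2) with hε'def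
  have hε'pos : 0 < ε' := lt_min hε one_half_pos
  have hε'le : ε' ≤ ε := min_le_left _ _
  have hε'half : ε' ≤ 1 / 2 := min_le_right _ _
  set d : ℝ := c * ε' / (4 * K) with hddef
  have hdpos : 0 < d := by positivity
  set δ : ℕ → ℝ := fun i => d / 2 ^ (i + 1) with hδdef
  have hδpos : ∀ i, 0 < δ i := by
    intro i; rw [hδdef]; positivity
  have hδled : ∀ i, δ i ≤ d := by
    intro i
    rw [hδdef]
    apply div_le_self hdpos.le
    calc (1:ℝ) = 1 ^ (i+1) := (one_pow _).symm
      _ ≤ 2 ^ (i+1) := pow_le_pow_left₀ (by norm_num) (by norm_num) _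
  have hdc : d ≤ c / 2 := by
    rw [hddef]
    rw [div_le_div_iff₀ (by positivity) two_pos]
    nlinarith [mul_le_mul_of_nonneg_left hε'half hc.le]
  have hδle : ∀ i, δ i ≤ c / 2 := fun i => (hδled i).trans hdc
  have hδsum : ∀ n : ℕ, ∑ i ∈ Finset.range n, δ i ≤ d := by
    intro n
    have h1 : ∑ i ∈ Finset.range n, δ i = d * (1 / 2) * ∑ i ∈ Finset.range n, (1 / 2 : ℝ) ^ i := by
      rw [Finset.mul_sum]
      apply Finset.sum_congr rfl
      intro i _
      show d / 2 ^ (i + 1) = d * (1 / 2) * (1 / 2) ^ i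
      rw [pow_succ, one_div, inv_pow]; field_simp
    rw [h1]
    nlinarith [sum_geometric_two_le n, hdpos.le]
  -- Heads of the y's tend to zero (weak nullity).
  have hhead0 : ∀ m, Tendsto (fun n => S m (y n)) atTop (nhds 0) := by
    intro m
    have h1 : Tendsto (fun n => ∑ j ∈ Finset.range m, xstar j (y n) • x j) atTop
        (nhds (∑ j ∈ Finset.range m, (0 : ℝ) • x j)) :=
      tendsto_finset_sum _ fun j _ => (hweak (xstar j)).smul_const (x j)
    simp only [zero_smul, Finset.sum_const_zero] at h1
    have h2 : (fun n => S m (y n)) = fun n => ∑ j ∈ Finset.range m, xstar j (y n) • x j := by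
      funext n; exact hSapply m (y n)
    rw [h2]; exact h1
  -- The recursive selection step.
  have key : ∀ (i : ℕ) (kp : ℕ × ℕ), ∃ k' p' : ℕ, kp.1 < k' ∧ kp.2 < p' ∧
      ‖S (kp.2 + 1) (y k')‖ ≤ δ i / 2 ∧ ‖y k' - S (p' + 1) (y k')‖ ≤ δ i / 2 := by
    intro i kp
    have hδ2 : 0 < δ i / 2 := half_pos (hδpos i)
    have h1 : ∀ᶠ n in atTop, ‖S (kp.2 + 1) (y n)‖ < δ i / 2 := by
      have := hhead0 (kp.2 + 1)
      rw [NormedAddCommGroup.tendsto_nhds_zero] at this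
      exact this _ hδ2
    obtain ⟨k', hk'1, hk'2⟩ := (h1.and (eventually_gt_atTop kp.1)).exists
    have h2 : Tendsto (fun m => y k' - S m (y k')) atTop (nhds 0) := by
      have := (tendsto_const_nhds (x := y k') (f := atTop (α := ℕ))).sub (hSto (y k'))
      simpa using this
    rw [NormedAddCommGroup.tendsto_nhds_zero] at h2
    obtain ⟨m, hm1, hm2⟩ := ((h2 _ hδ2).and (eventually_ge_atTop (kp.2 + 2))).exists
    refine ⟨k', m - 1, hk'2, by omega, hk'1.le, ?_⟩
    have hm3 : m - 1 + 1 = m := by omega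
    rw [hm3]
    exact hm1.le
  choose F1 F2 hFk hFp hFhead hFtail using key
  set F : ℕ → ℕ × ℕ → ℕ × ℕ := fun i kp => (F1 i kp, F2 i kp) with hFdef
  set st : ℕ → ℕ × ℕ := stmt18St F with hstdef
  set p : ℕ → ℕ := stmt18P F with hpdef
  set k : ℕ → ℕ := fun i => (st i).1 with hkdef
  have hst0 : st 0 = F 0 (0, 0) := rfl
  have hstS : ∀ i, st (i + 1) = F (i + 1) (st i) := fun i => rfl
  have hp0 : p 0 = 0 := rfl
  have hpS : ∀ i, p (i + 1) = (st i).2 := fun i => rfl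
  have hkmono : StrictMono k := by
    apply strictMono_nat_of_lt_succ
    intro i
    have := hFk (i + 1) (st i)
    simpa [hkdef, hstS i, hFdef] using this
  have hpmono : StrictMono p := by
    apply strictMono_nat_of_lt_succ
    intro i
    cases i with
    | zero =>
      have := hFp 0 (0, 0)
      simpa [hpdef, hp0, hpS 0, hst0, hFdef, stmt18P, stmt18St] using this
    | succ i =>
      have := hFp (i + 1) (st i)
      simpa [hpS, hstS i, hFdef] using this
  have hHead : ∀ i, ‖S (p i + 1) (y (k i))‖ ≤ δ i / 2 := by
    intro i
    cases i with
    | zero =>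
      have := hFhead 0 (0, 0)
      simpa [hkdef, hp0, hst0, hFdef] using this
    | succ i =>
      have := hFhead (i + 1) (st i)
      simpa [hkdef, hpS, hstS i, hFdef] using this
  have hTail : ∀ i, ‖y (k i) - S (p (i + 1) + 1) (y (k i))‖ ≤ δ i / 2 := by
    intro i
    cases i with
    | zero =>
      have := hFtail 0 (0, 0)
      simpa [hkdef, hpS 0, hst0, hFdef] using this
    | succ i =>
      have := hFtail (i + 1) (st i)
      simpa [hkdef, hpS, hstS i, hFdef] using this
  -- The block coefficients.
  set b : ℕ → ℝ := fun j => xstar j (y (k (Nat.findGreatest (fun i => p i < j) j))) with hbdef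
  have hb : ∀ i j, j ∈ Finset.Ioc (p i) (p (i + 1)) → b j = xstar j (y (k i)) := by
    intro i j hj
    rw [Finset.mem_Ioc] at hj
    have hfind : Nat.findGreatest (fun i' => p i' < j) j = i := by
      rw [Nat.findGreatest_eq_iff]
      refine ⟨le_trans hpmono.le_apply hj.1.le, fun _ => hj.1, ?_⟩
      intro n hn1 hn2 hpn
      have : p (i + 1) ≤ p n := hpmono.monotone hn1
      omega
    rw [hbdef]
    simp only [hfind]
  -- The block vectors.
  set z : ℕ → X := fun i => ∑ j ∈ Finset.Ioc (p i) (p (i + 1)), b j • x j with hzdef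
  have hzval : ∀ i, z i = S (p (i + 1) + 1) (y (k i)) - S (p i + 1) (y (k i)) := by
    intro i
    have hsplit : ∀ f : ℕ → X,
        (∑ j ∈ Finset.range (p i + 1), f j) + ∑ j ∈ Finset.Ioc (p i) (p (i + 1)), f j =
          ∑ j ∈ Finset.range (p (i + 1) + 1), f j := by
      intro f
      rw [Finset.range_eq_Ico, Finset.range_eq_Ico, ← Finset.Ico_add_one_add_one_eq_Ioc]
      exact Finset.sum_Ico_consecutive f (m := 0) (n := p i + 1) (k := p (i + 1) + 1) (by omega) (by
        have := hpmono (show i < i + 1 by omega)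
        omega)
    have h1 : z i = ∑ j ∈ Finset.Ioc (p i) (p (i + 1)), xstar j (y (k i)) • x j := by
      rw [hzdef]
      exact Finset.sum_congr rfl fun j hj => by rw [hb i j hj]
    rw [h1]
    refine eq_sub_of_add_eq' ?_
    rw [hSapply, hSapply]
    exact hsplit _
  have happrox : ∀ i, ‖y (k i) - z i‖ ≤ δ i := by
    intro i
    have h1 : y (k i) - z i =
        (y (k i) - S (p (i + 1) + 1) (y (k i))) + S (p i + 1) (y (k i)) := by
      rw [hzval i]; abel
    rw [h1]
    calc ‖(y (k i) - S (p (i + 1) + 1) (y (k i))) + S (p i + 1) (y (k i))‖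
        ≤ ‖y (k i) - S (p (i + 1) + 1) (y (k i))‖ + ‖S (p i + 1) (y (k i))‖ := norm_add_le _ _
      _ ≤ δ i / 2 + δ i / 2 := add_le_add (hTail i) (hHead i)
      _ = δ i := by ring
  have hznorm : ∀ i, c / 2 ≤ ‖z i‖ := by
    intro i
    have h1 := norm_sub_norm_le (y (k i)) (z i)
    have h2 := (hy (k i)).1
    have h3 := happrox i
    have h4 := hδle i
    linarith
  -- Projection action on blocks.
  have hSz : ∀ (m i' : ℕ), S m (z i') =
      ∑ j ∈ Finset.Ioc (p i') (p (i' + 1)), b j • (if j < m then x j else 0) := by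
    intro m i'
    rw [hzdef]
    rw [map_sum]
    exact Finset.sum_congr rfl fun j _ => by rw [ContinuousLinearMap.map_smul, hSx]
  have hSzfull : ∀ (m i' : ℕ), p (i' + 1) < m → S m (z i') = z i' := by
    intro m i' hm
    rw [hSz, hzdef]
    apply Finset.sum_congr rfl
    intro j hj
    rw [Finset.mem_Ioc] at hj
    rw [if_pos (by omega)]
  have hSzzero : ∀ (m i' : ℕ), m ≤ p i' + 1 → S m (z i') = 0 := by
    intro m i' hm
    rw [hSz]
    apply Finset.sum_eq_zero
    intro j hj
    rw [Finset.mem_Ioc] at hj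
    rw [if_neg (by omega), smul_zero]
  -- The main estimate.
  refine ⟨k, hkmono, p, hpmono, b, ?_⟩
  intro n a
  set Zv : X := ∑ i ∈ Finset.range n, a i • z i with hZvdef
  set Yv : X := ∑ i ∈ Finset.range n, a i • y (k i) with hYvdef
  have hZnn : 0 ≤ ‖Zv‖ := norm_nonneg _
  -- coefficient bound
  have hcoef : ∀ i ∈ Finset.range n, |a i| ≤ 4 * K * ‖Zv‖ / c := by
    intro i hi
    have hid : S (p (i + 1) + 1) Zv - S (p i + 1) Zv = a i • z i := by
      rw [hZvdef, map_sum, map_sum, ← Finset.sum_sub_distrib]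
      have h1 : ∀ i' ∈ Finset.range n,
          S (p (i + 1) + 1) (a i' • z i') - S (p i + 1) (a i' • z i') =
            if i' = i then a i • z i else 0 := by
        intro i' _
        rcases lt_trichotomy i' i with h | h | h
        · have h2 : p (i' + 1) ≤ p (i + 1) := hpmono.monotone (by omega)
          have h3 : p (i' + 1) ≤ p i := hpmono.monotone (by omega)
          have e1 : S (p (i + 1) + 1) (a i' • z i') = a i' • z i' := by
            rw [ContinuousLinearMap.map_smul, hSzfull _ i' (by omega)]
          have e2 : S (p i + 1) (a i' • z i') = a i' • z i' := by
            rw [ContinuousLinearMap.map_smul, hSzfull _ i' (by omega)]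
          rw [e1, e2, if_neg (by omega)]
          abel
        · subst h
          have e1 : S (p (i' + 1) + 1) (a i' • z i') = a i' • z i' := by
            rw [ContinuousLinearMap.map_smul, hSzfull _ i' (by omega)]
          have e2 : S (p i' + 1) (a i' • z i') = 0 := by
            rw [ContinuousLinearMap.map_smul, hSzzero _ i' (by omega), smul_zero]
          rw [e1, e2, if_pos rfl]
          abel
        · have e1 : S (p (i + 1) + 1) (a i' • z i') = 0 := by
            rw [ContinuousLinearMap.map_smul, hSzzero _ i' (by
              have h2 : p (i + 1) ≤ p i' := hpmono.monotone (by omega)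
              omega), smul_zero]
          have e2 : S (p i + 1) (a i' • z i') = 0 := by
            rw [ContinuousLinearMap.map_smul, hSzzero _ i' (by
              have h2 : p i ≤ p i' := hpmono.monotone (by omega)
              omega), smul_zero]
          rw [e1, e2, if_neg (by omega)]
          abel
      rw [Finset.sum_congr rfl h1, Finset.sum_ite_eq']
      simp [hi]
    have hnorm1 : ‖a i • z i‖ ≤ 2 * K * ‖Zv‖ := by
      rw [← hid]
      calc ‖S (p (i + 1) + 1) Zv - S (p i + 1) Zv‖
          ≤ ‖S (p (i + 1) + 1) Zv‖ + ‖S (p i + 1) Zv‖ := norm_sub_le _ _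
        _ ≤ K * ‖Zv‖ + K * ‖Zv‖ := add_le_add
            (le_trans ((S (p (i + 1) + 1)).le_opNorm Zv)
              (mul_le_mul_of_nonneg_right (hK _) hZnn))
            (le_trans ((S (p i + 1)).le_opNorm Zv)
              (mul_le_mul_of_nonneg_right (hK _) hZnn))
        _ = 2 * K * ‖Zv‖ := by ring
    have hnorm2 : |a i| * (c / 2) ≤ 2 * K * ‖Zv‖ := by
      calc |a i| * (c / 2) ≤ |a i| * ‖z i‖ :=
            mul_le_mul_of_nonneg_left (hznorm i) (abs_nonneg _)
        _ = ‖a i • z i‖ := by rw [norm_smul, Real.norm_eq_abs]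
        _ ≤ 2 * K * ‖Zv‖ := hnorm1
    rw [le_div_iff₀ hc]
    nlinarith
  -- perturbation bound
  have hdiff : ‖Yv - Zv‖ ≤ ε' * ‖Zv‖ := by
    have h1 : Yv - Zv = ∑ i ∈ Finset.range n, a i • (y (k i) - z i) := by
      rw [hYvdef, hZvdef, ← Finset.sum_sub_distrib]
      exact Finset.sum_congr rfl fun i _ => by rw [smul_sub]
    rw [h1]
    calc ‖∑ i ∈ Finset.range n, a i • (y (k i) - z i)‖
        ≤ ∑ i ∈ Finset.range n, ‖a i • (y (k i) - z i)‖ := norm_sum_le _ _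
      _ ≤ ∑ i ∈ Finset.range n, (4 * K * ‖Zv‖ / c) * δ i := by
          apply Finset.sum_le_sum
          intro i hi
          rw [norm_smul, Real.norm_eq_abs]
          exact mul_le_mul (hcoef i hi) (happrox i) (norm_nonneg _)
            (by positivity)
      _ = (4 * K * ‖Zv‖ / c) * ∑ i ∈ Finset.range n, δ i := by rw [Finset.mul_sum]
      _ ≤ (4 * K * ‖Zv‖ / c) * d :=
          mul_le_mul_of_nonneg_left (hδsum n) (by positivity)
      _ = ε' * ‖Zv‖ := by
          rw [hddef]
          field_simp
  have hYZ1 : ‖Yv‖ ≤ ‖Zv‖ + ε' * ‖Zv‖ := by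
    have := norm_sub_norm_le Yv Zv
    linarith [this.trans hdiff]
  have hYZ2 : ‖Zv‖ - ε' * ‖Zv‖ ≤ ‖Yv‖ := by
    have h1 : ‖Zv‖ - ‖Yv‖ ≤ ‖Yv - Zv‖ := by
      have := norm_sub_norm_le Zv Yv
      rw [show Zv - Yv = -(Yv - Zv) by abel, norm_neg] at this
      linarith
    linarith [h1.trans hdiff]
  constructor
  · calc (1 - ε) * ‖Zv‖ ≤ (1 - ε') * ‖Zv‖ :=
        mul_le_mul_of_nonneg_right (by linarith) hZnn
      _ = ‖Zv‖ - ε' * ‖Zv‖ := by ring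
      _ ≤ ‖Yv‖ := hYZ2
  · calc ‖Yv‖ ≤ ‖Zv‖ + ε' * ‖Zv‖ := hYZ1
      _ = (1 + ε') * ‖Zv‖ := by ring
      _ ≤ (1 + ε) * ‖Zv‖ := mul_le_mul_of_nonneg_right (by linarith) hZnn
end

section
/- For 1 < p < ∞ and any bounded operator T: ℓ_p → ℓ_p, χ(T*) ≤ SS_{ℓ_p}(T), where SS_{ℓ_p}(T) = sup{(‖S‖·‖(TS)^{-1}‖)^{-1} : S: ℓ_p → ℓ_p bounded with TS an isomorphism onto its range}. -/
open NormedSpace Metric Set Filter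
open scoped ENNReal

set_option linter.unusedSectionVars false

namespace Stmt19Aux

variable {p : ℝ≥0∞} [Fact (1 ≤ p)]

local notation "Xp" => lp (fun _ : ℕ => ℝ) p

lemma p_ne_zero : p ≠ 0 := (lt_of_lt_of_le zero_lt_one Fact.out).ne'

/-- coordinate functional -/
noncomputable def coord (p : ℝ≥0∞) [Fact (1 ≤ p)] (j : ℕ) : lp (fun _ : ℕ => ℝ) p →L[ℝ] ℝ :=
  LinearMap.mkContinuous
    { toFun := fun f => f j
      map_add' := fun f g => rfl
      map_smul' := fun c f => rfl }
    1 (fun f => by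
      rw [one_mul]; exact lp.norm_apply_le_norm (p_ne_zero (p := p)) f j)

@[simp] lemma coord_apply (j : ℕ) (f : Xp) : coord p j f = f j := rfl

/-- truncation to a finite set of coordinates -/
noncomputable def trunc (s : Finset ℕ) (f : Xp) : Xp :=
  ∑ i ∈ s, lp.single p i (f i)

lemma trunc_apply (s : Finset ℕ) (f : Xp) (n : ℕ) :
    trunc s f n = if n ∈ s then f n else 0 := by
  simp only [trunc, lp.coeFn_sum, Finset.sum_apply, lp.single_apply, Finset.sum_dite_eq, Pi.single_apply, Finset.sum_ite_eq]

lemma trunc_apply_of_not_mem (s : Finset ℕ) (f : Xp) {n : ℕ} (hn : n ∉ s) :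
    trunc s f n = 0 := by rw [trunc_apply]; simp [hn]

lemma trunc_apply_of_mem (s : Finset ℕ) (f : Xp) {n : ℕ} (hn : n ∈ s) :
    trunc s f n = f n := by rw [trunc_apply]; simp [hn]

/-- simple dependent-choice recursion -/
lemma rec_seq {σ : Type*} (s0 : σ) {R : σ → σ → Prop} (h : ∀ s, ∃ t, R s t) :
    ∃ f : ℕ → σ, f 0 = s0 ∧ ∀ n, R (f n) (f (n + 1)) := by
  choose g hg using h
  refine ⟨fun n => g^[n] s0, rfl, fun n => ?_⟩
  have h' : g^[n + 1] s0 = g (g^[n] s0) := Function.iterate_succ_apply' g n s0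
  simp only [h']
  exact hg _

variable (hP : 0 < p.toReal)
include hP

lemma norm_trunc_rpow (s : Finset ℕ) (f : Xp) :
    ‖trunc s f‖ ^ p.toReal = ∑ i ∈ s, ‖f i‖ ^ p.toReal :=
  lp.norm_sum_single hP _ s

lemma norm_trunc_le (s : Finset ℕ) (f : Xp) : ‖trunc s f‖ ≤ ‖f‖ := by
  rw [← Real.rpow_le_rpow_iff (norm_nonneg _) (norm_nonneg _) hP, norm_trunc_rpow hP]
  exact lp.sum_rpow_le_norm_rpow hP f s

lemma norm_sub_trunc_rpow (s : Finset ℕ) (f : Xp) :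
    ‖f - trunc s f‖ ^ p.toReal = ‖f‖ ^ p.toReal - ∑ i ∈ s, ‖f i‖ ^ p.toReal :=
  lp.norm_compl_sum_single hP f s

lemma norm_sub_trunc_anti {s t : Finset ℕ} (hst : s ⊆ t) (f : Xp) :
    ‖f - trunc t f‖ ≤ ‖f - trunc s f‖ := by
  rw [← Real.rpow_le_rpow_iff (norm_nonneg _) (norm_nonneg _) hP, norm_sub_trunc_rpow hP,
    norm_sub_trunc_rpow hP]
  have : ∑ i ∈ s, ‖f i‖ ^ p.toReal ≤ ∑ i ∈ t, ‖f i‖ ^ p.toReal :=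
    Finset.sum_le_sum_of_subset_of_nonneg hst
      (fun i _ _ => Real.rpow_nonneg (norm_nonneg _) _)
  linarith

/-- tails are small -/
lemma exists_trunc_tail_small (f : Xp) {δ : ℝ} (hδ : 0 < δ) :
    ∃ m : ℕ, ∀ m', m ≤ m' → ‖f - trunc (Finset.range m') f‖ ≤ δ := by
  have hsum := lp.hasSum_norm hP f
  rw [HasSum] at hsum
  have hδP : 0 < δ ^ p.toReal := Real.rpow_pos_of_pos hδ _
  have := hsum (Metric.ball_mem_nhds _ hδP)
  rw [SummationFilter.unconditional_filter, Filter.mem_map, Filter.mem_atTop_sets] at this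
  obtain ⟨s₀, hs₀⟩ := this
  refine ⟨s₀.sup id + 1, fun m' hm' => ?_⟩
  have hsub : s₀ ⊆ Finset.range m' := by
    intro i hi
    have : i ≤ s₀.sup id := Finset.le_sup (f := id) hi
    exact Finset.mem_range.2 (lt_of_lt_of_le (Nat.lt_succ_of_le this) hm')
  have h1 : ‖f‖ ^ p.toReal - ∑ i ∈ s₀, ‖f i‖ ^ p.toReal < δ ^ p.toReal := by
    have := hs₀ s₀ (le_refl _)
    simp only [Set.mem_preimage, Metric.mem_ball, Real.dist_eq] at this
    have h2 : ∑ i ∈ s₀, ‖f i‖ ^ p.toReal ≤ ‖f‖ ^ p.toReal := lp.sum_rpow_le_norm_rpow hP f s₀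
    rw [abs_sub_comm, abs_of_nonneg (by linarith)] at this
    exact this
  rw [← Real.rpow_le_rpow_iff (norm_nonneg _) hδ.le hP, norm_sub_trunc_rpow hP]
  have h3 : ∑ i ∈ s₀, ‖f i‖ ^ p.toReal ≤ ∑ i ∈ Finset.range m', ‖f i‖ ^ p.toReal :=
    Finset.sum_le_sum_of_subset_of_nonneg hsub
      (fun i _ _ => Real.rpow_nonneg (norm_nonneg _) _)
  linarith

/-- additivity of ‖·‖^p over disjointly supported vectors -/
lemma norm_sum_disjoint_rpow {ι : Type*} (F : Finset ι) (z : ι → Xp)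
    (hd : ∀ k ∈ F, ∀ l ∈ F, k ≠ l → ∀ n : ℕ, z k n = 0 ∨ z l n = 0) :
    ‖∑ k ∈ F, z k‖ ^ p.toReal = ∑ k ∈ F, ‖z k‖ ^ p.toReal := by
  rw [lp.norm_rpow_eq_tsum hP]
  have h1 : ∀ n : ℕ, ‖(∑ k ∈ F, z k) n‖ ^ p.toReal = ∑ k ∈ F, ‖z k n‖ ^ p.toReal := by
    intro n
    rw [lp.coeFn_sum, Finset.sum_apply]
    by_cases hex : ∃ k ∈ F, z k n ≠ 0
    · obtain ⟨k0, hk0F, hk0⟩ := hex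
      have hz : ∀ l ∈ F, l ≠ k0 → z l n = 0 := fun l hl hne => by
        rcases hd l hl k0 hk0F hne n with h | h
        · exact h
        · exact absurd h hk0
      rw [Finset.sum_eq_single_of_mem k0 hk0F hz,
        Finset.sum_eq_single_of_mem k0 hk0F
          (fun l hl hne => by rw [hz l hl hne]; simp [Real.zero_rpow hP.ne'])]
    · push_neg at hex
      rw [Finset.sum_eq_zero hex,
        Finset.sum_eq_zero (fun l hl => by rw [hex l hl]; simp [Real.zero_rpow hP.ne'])]
      simp [Real.zero_rpow hP.ne']
  calc ∑' n, ‖(∑ k ∈ F, z k) n‖ ^ p.toReal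
      = ∑' n, ∑ k ∈ F, ‖z k n‖ ^ p.toReal := tsum_congr h1
    _ = ∑ k ∈ F, ∑' n, ‖z k n‖ ^ p.toReal :=
        Summable.tsum_finsetSum (fun k _ => (lp.memℓp (z k)).summable hP)
    _ = ∑ k ∈ F, ‖z k‖ ^ p.toReal := by
        exact Finset.sum_congr rfl (fun k _ => (lp.norm_rpow_eq_tsum hP (z k)).symm)



omit hP

variable (hp1 : 1 < p) (hp2 : p ≠ ⊤)
include hp1 hp2

lemma hP' : 1 < p.toReal := by
  rw [← ENNReal.toReal_one]
  exact ENNReal.toReal_strict_mono hp2 hp1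

/-- Any continuous functional on ℓ_p (p > 1) is uniformly small on far tails. -/
lemma func_tail (g : StrongDual ℝ Xp) {δ : ℝ} (hδ : 0 < δ) :
    ∃ n : ℕ, ∀ v : Xp, ‖v‖ ≤ 1 → (∀ i, i < n → v i = 0) → |g v| ≤ δ := by
  have hP : 0 < p.toReal := lt_trans zero_lt_one (hP' hp1 hp2)
  by_contra hcon
  push_neg at hcon
  -- finitely supported witnesses
  have hfs : ∀ n : ℕ, ∃ w : Xp, ∃ m : ℕ, n < m ∧ ‖w‖ ≤ 1 ∧ (∀ i, i < n → w i = 0) ∧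
      (∀ i, m ≤ i → w i = 0) ∧ δ / 2 < g w := by
    intro n
    obtain ⟨v, hv1, hv2, hv3⟩ := hcon n
    obtain ⟨m0, hm0⟩ := exists_trunc_tail_small hP v
      (δ := δ / (2 * (‖g‖ + 1))) (by positivity)
    set m := max m0 (n + 1) with hm
    have htail : ‖v - trunc (Finset.range m) v‖ ≤ δ / (2 * (‖g‖ + 1)) :=
      hm0 m (le_max_left _ _)
    set w0 : Xp := trunc (Finset.range m) v with hw0
    have hgw0 : δ / 2 < |g w0| := by
      have h1 : |g v - g w0| ≤ ‖g‖ * ‖v - w0‖ := by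
        rw [← map_sub]
        exact g.le_opNorm _
      have h2 : ‖g‖ * ‖v - w0‖ ≤ ‖g‖ * (δ / (2 * (‖g‖ + 1))) :=
        mul_le_mul_of_nonneg_left htail (norm_nonneg _)
      have h3 : ‖g‖ * (δ / (2 * (‖g‖ + 1))) ≤ δ / 2 := by
        have hg0 : (0:ℝ) ≤ ‖g‖ := norm_nonneg _
        rw [mul_div_assoc', div_le_div_iff₀ (by positivity) (by norm_num : (0:ℝ) < 2)]
        nlinarith
      have := abs_sub_abs_le_abs_sub (g v) (g w0)
      linarith
    rcases le_or_gt (g w0) 0 with hsgn | hsgn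
    · refine ⟨-w0, m, lt_of_lt_of_le (Nat.lt_succ_self n) (le_max_right _ _), ?_, ?_, ?_, ?_⟩
      · rw [norm_neg]; exact le_trans (norm_trunc_le hP _ _) hv1
      · intro i hi
        rw [lp.coeFn_neg, Pi.neg_apply, hw0, trunc_apply]
        split
        · rw [hv2 i hi]; ring
        · ring
      · intro i hi
        rw [lp.coeFn_neg, Pi.neg_apply, hw0, trunc_apply_of_not_mem _ _ (by
          simp only [Finset.mem_range, not_lt]; exact hi)]
        ring
      · rw [map_neg]
        rw [abs_of_nonpos hsgn] at hgw0
        linarith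
    · refine ⟨w0, m, lt_of_lt_of_le (Nat.lt_succ_self n) (le_max_right _ _), ?_, ?_, ?_, ?_⟩
      · exact le_trans (norm_trunc_le hP _ _) hv1
      · intro i hi
        rw [hw0, trunc_apply]
        split
        · exact hv2 i hi
        · rfl
      · intro i hi
        exact trunc_apply_of_not_mem _ _ (by
          simp only [Finset.mem_range, not_lt]; exact hi)
      · rw [abs_of_pos hsgn] at hgw0
        linarith
  -- recursive disjoint sequence
  obtain ⟨f, hf0, hfR⟩ := rec_seq ((0, 0) : ℕ × Xp)
    (R := fun s t => s.1 < t.1 ∧ ‖t.2‖ ≤ 1 ∧ (∀ i, i < s.1 → t.2 i = 0) ∧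
      (∀ i, t.1 ≤ i → t.2 i = 0) ∧ δ / 2 < g t.2)
    (fun s => by
      obtain ⟨w, m, h1, h2, h3, h4, h5⟩ := hfs s.1
      exact ⟨(m, w), h1, h2, h3, h4, h5⟩)
  set nn : ℕ → ℕ := fun k => (f k).1 with hnn
  set w : ℕ → Xp := fun k => (f (k + 1)).2 with hw
  have hmono : StrictMono nn := strictMono_nat_of_lt_succ (fun k => (hfR k).1)
  have hw_norm : ∀ k, ‖w k‖ ≤ 1 := fun k => (hfR k).2.1
  have hw_lo : ∀ k i, i < nn k → w k i = 0 := fun k => (hfR k).2.2.1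
  have hw_hi : ∀ k i, nn (k + 1) ≤ i → w k i = 0 := fun k => (hfR k).2.2.2.1
  have hw_g : ∀ k, δ / 2 < g (w k) := fun k => (hfR k).2.2.2.2
  have hdisj : ∀ k l, k ≠ l → ∀ n : ℕ, w k n = 0 ∨ w l n = 0 := by
    have key : ∀ k l, k < l → ∀ n : ℕ, w k n = 0 ∨ w l n = 0 := by
      intro k l hkl n
      rcases lt_or_ge n (nn (k + 1)) with h' | h'
      · exact Or.inr (hw_lo l n (lt_of_lt_of_le h' (hmono.monotone (Nat.succ_le_of_lt hkl))))
      · exact Or.inl (hw_hi k n h')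
    intro k l hkl n
    rcases lt_or_gt_of_ne hkl with h | h
    · exact key k l h n
    · exact (key l k h n).symm
  -- the contradiction
  obtain ⟨K, hK1, hK2⟩ : ∃ K : ℕ, (1:ℝ) ≤ (K:ℝ) ∧
      2 * (‖g‖ + 1) / δ < (K : ℝ) ^ (1 - 1 / p.toReal) := by
    have h1P : 0 < 1 - 1 / p.toReal := by
      have h2 : 1 / p.toReal < 1 := by
        rw [div_lt_one hP]; exact hP' hp1 hp2
      linarith
    obtain ⟨x0, hx0⟩ :=
      ((tendsto_rpow_atTop h1P).eventually_gt_atTop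
        (2 * (‖g‖ + 1) / δ)).exists_forall_of_atTop
    obtain ⟨K, hK⟩ := exists_nat_ge (max x0 1)
    exact ⟨K, le_trans (le_max_right x0 1) hK, hx0 _ (le_trans (le_max_left x0 1) hK)⟩
  have hKpos : (0:ℝ) < (K:ℝ) := lt_of_lt_of_le zero_lt_one hK1
  set z : Xp := ∑ k ∈ Finset.range K, w k with hz
  have hz_g : (K : ℝ) * (δ / 2) ≤ g z := by
    have h0 : g z = ∑ k ∈ Finset.range K, g (w k) := by rw [hz, map_sum]
    rw [h0]
    have h1 : (K:ℝ) * (δ/2) = ∑ _k ∈ Finset.range K, δ/2 := by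
      rw [Finset.sum_const, Finset.card_range, nsmul_eq_mul]
    rw [h1]
    exact Finset.sum_le_sum fun k _ => (hw_g k).le
  have hz_norm : ‖z‖ ≤ (K : ℝ) ^ (1 / p.toReal) := by
    have hzp : ‖z‖ ^ p.toReal = ∑ k ∈ Finset.range K, ‖w k‖ ^ p.toReal :=
      norm_sum_disjoint_rpow hP _ _ (fun k _ l _ hne n => hdisj k l hne n)
    have hle : ‖z‖ ^ p.toReal ≤ (K : ℝ) := by
      rw [hzp]
      calc ∑ k ∈ Finset.range K, ‖w k‖ ^ p.toReal
          ≤ ∑ _k ∈ Finset.range K, (1:ℝ) :=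
            Finset.sum_le_sum fun k _ =>
              Real.rpow_le_one (norm_nonneg _) (hw_norm k) hP.le
        _ = (K:ℝ) := by simp
    rw [← Real.rpow_le_rpow_iff (norm_nonneg _)
      (Real.rpow_nonneg hKpos.le _) hP, ← Real.rpow_mul hKpos.le, one_div,
      inv_mul_cancel₀ hP.ne', Real.rpow_one]
    exact hle
  have hgz_le : g z ≤ ‖g‖ * ‖z‖ := le_trans (le_abs_self _) (g.le_opNorm z)
  have hfinal : (K:ℝ) * (δ/2) ≤ ‖g‖ * (K : ℝ) ^ (1 / p.toReal) :=
    le_trans hz_g (le_trans hgz_le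
      (mul_le_mul_of_nonneg_left hz_norm (norm_nonneg _)))
  have hb : (0:ℝ) < (K:ℝ) ^ (1 / p.toReal) := Real.rpow_pos_of_pos hKpos _
  have hab : (K:ℝ) = (K:ℝ) ^ (1 - 1 / p.toReal) * (K:ℝ) ^ (1 / p.toReal) := by
    rw [← Real.rpow_add hKpos]; norm_num
  have hd2 : 2 * (‖g‖ + 1) < (K : ℝ) ^ (1 - 1 / p.toReal) * δ :=
    (div_lt_iff₀ hδ).mp hK2
  have hg0 : (0:ℝ) ≤ ‖g‖ := norm_nonneg _
  nlinarith [mul_lt_mul_of_pos_right hd2 hb]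


omit hp1 hp2 in
lemma rpow_lt_of_rpow_lt {x y P : ℝ} (hP : 0 < P) (hx : 0 ≤ x) (hy : 0 ≤ y)
    (h : x ^ P < y ^ P) : x < y := by
  by_contra hc
  push_neg at hc
  exact absurd (Real.rpow_le_rpow hy hc hP.le) (not_le.2 h)

/-- heads of images of far-supported vectors are coordinatewise small -/
lemma head_tail (T : Xp →L[ℝ] Xp) (J : ℕ) {δ : ℝ} (hδ : 0 < δ) :
    ∃ n : ℕ, ∀ v : Xp, ‖v‖ ≤ 1 → (∀ i, i < n → v i = 0) →
      ∀ j, j < J → |(T v : ∀ _ : ℕ, ℝ) j| ≤ δ := by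
  have hc : ∀ j : ℕ, ∃ n : ℕ, ∀ v : Xp, ‖v‖ ≤ 1 → (∀ i, i < n → v i = 0) →
      |((coord p j).comp T) v| ≤ δ := fun j => func_tail hp1 hp2 _ hδ
  choose nf hnf using hc
  refine ⟨(Finset.range J).sup nf, fun v hv1 hv2 j hj => ?_⟩
  have h1 : nf j ≤ (Finset.range J).sup nf := Finset.le_sup (Finset.mem_range.2 hj)
  exact hnf j v hv1 (fun i hi => hv2 i (lt_of_lt_of_le hi h1))

/-- selection of finitely supported almost-norming vectors -/
lemma sel (T : Xp →L[ℝ] Xp) {γ : ℝ} (hγ : 0 < γ)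
    (hnH : ∀ G : Finset (StrongDual ℝ Xp), ∃ x : Xp, (∀ f ∈ G, f x = 0) ∧ γ * ‖x‖ < ‖T x‖)
    (n : ℕ) {δ : ℝ} (hδ : 0 < δ) :
    ∃ v : Xp, ∃ m : ℕ, n < m ∧ ‖v‖ ≤ 1 ∧ (∀ i, i < n → v i = 0) ∧
      (∀ i, m ≤ i → v i = 0) ∧ γ - δ ≤ ‖T v‖ := by
  classical
  have hP : 0 < p.toReal := lt_trans zero_lt_one (hP' hp1 hp2)
  obtain ⟨x, hx1, hx2⟩ := hnH ((Finset.range n).image (coord p))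
  have hx0 : x ≠ 0 := by
    rintro rfl
    simp only [norm_zero, mul_zero, map_zero] at hx2
    exact lt_irrefl _ hx2
  have hxn : (0:ℝ) < ‖x‖ := norm_pos_iff.2 hx0
  set u : Xp := ‖x‖⁻¹ • x with hu
  have hun : ‖u‖ = 1 := by
    rw [hu, norm_smul, norm_inv, norm_norm, inv_mul_cancel₀ hxn.ne']
  have hulo : ∀ i, i < n → u i = 0 := by
    intro i hi
    have hco : (coord p i) x = 0 :=
      hx1 _ (Finset.mem_image_of_mem _ (Finset.mem_range.2 hi))
    have hxi : x i = 0 := hco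
    rw [hu, lp.coeFn_smul, Pi.smul_apply, hxi, smul_zero]
  have hTu : γ < ‖T u‖ := by
    rw [hu, map_smul, norm_smul, norm_inv, norm_norm]
    rw [show γ = ‖x‖⁻¹ * (γ * ‖x‖) by field_simp]
    exact mul_lt_mul_of_pos_left hx2 (inv_pos.2 hxn)
  obtain ⟨m0, hm0⟩ := exists_trunc_tail_small hP u (δ := δ / (‖T‖ + 1)) (by positivity)
  set m := max m0 (n + 1) with hm
  refine ⟨trunc (Finset.range m) u, m,
    lt_of_lt_of_le (Nat.lt_succ_self n) (le_max_right _ _), ?_, ?_, ?_, ?_⟩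
  · rw [← hun]; exact norm_trunc_le hP _ _
  · intro i hi
    rw [trunc_apply]
    split
    · exact hulo i hi
    · rfl
  · intro i hi
    exact trunc_apply_of_not_mem _ _ (by simp only [Finset.mem_range, not_lt]; exact hi)
  · have h1 : ‖T u - T (trunc (Finset.range m) u)‖ ≤ ‖T‖ * (δ / (‖T‖ + 1)) := by
      rw [← map_sub]
      exact le_trans (T.le_opNorm _) (mul_le_mul_of_nonneg_left
        (hm0 m (le_max_left _ _)) (norm_nonneg _))
    have h2 : ‖T‖ * (δ / (‖T‖ + 1)) ≤ δ := by
      have hT0 : (0:ℝ) ≤ ‖T‖ := norm_nonneg _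
      rw [mul_div_assoc', div_le_iff₀ (by positivity)]
      nlinarith
    have h3 := norm_sub_norm_le (T u) (T (trunc (Finset.range m) u))
    linarith

/-- head truncation norm bound via coordinates -/
lemma norm_trunc_le_sum (hP : 0 < p.toReal) (c : ℕ) (f : Xp) {δ : ℝ} (hδ : 0 ≤ δ)
    (h : ∀ j, j < c → |(f : ∀ _ : ℕ, ℝ) j| ≤ δ) :
    ‖trunc (Finset.range c) f‖ ≤ c * δ := by
  unfold trunc
  refine le_trans (norm_sum_le (Finset.range c)
    (fun i => lp.single p i ((f : ∀ _ : ℕ, ℝ) i))) ?_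
  have h2 : ∀ i ∈ Finset.range c,
      ‖lp.single (E := fun _ : ℕ => ℝ) p i ((f : ∀ _ : ℕ, ℝ) i)‖ ≤ δ := by
    intro i hi
    rw [lp.norm_single (ENNReal.toReal_pos_iff.1 hP).1]
    exact le_trans (le_of_eq (Real.norm_eq_abs _)) (h i (Finset.mem_range.1 hi))
  refine le_trans (Finset.sum_le_sum h2) ?_
  rw [Finset.sum_const, Finset.card_range, nsmul_eq_mul]

omit hp1 hp2

/-- the sum operator associated with disjointly supported vectors in the unit ball -/
lemma exists_sum_op (hP : 0 < p.toReal) {v : ℕ → Xp} (hv1 : ∀ k, ‖v k‖ ≤ 1)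
    (hdisj : ∀ k l, k ≠ l → ∀ n : ℕ, v k n = 0 ∨ v l n = 0) :
    ∃ S : Xp →L[ℝ] Xp, ‖S‖ ≤ 1 ∧ ∀ a : Xp, HasSum (fun k => a k • v k) (S a) := by
  have hsmuldisj : ∀ (a : Xp) (k l : ℕ), k ≠ l → ∀ n : ℕ,
      (a k • v k : Xp) n = 0 ∨ (a l • v l : Xp) n = 0 := by
    intro a k l hkl n
    rcases hdisj k l hkl n with h | h
    · exact Or.inl (by rw [lp.coeFn_smul, Pi.smul_apply, h, smul_zero])
    · exact Or.inr (by rw [lp.coeFn_smul, Pi.smul_apply, h, smul_zero])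
  have hpartial : ∀ (a : Xp) (s : Finset ℕ),
      ‖∑ k ∈ s, a k • v k‖ ^ p.toReal ≤ ∑ k ∈ s, ‖(a : ∀ _ : ℕ, ℝ) k‖ ^ p.toReal := by
    intro a s
    rw [norm_sum_disjoint_rpow hP s _ (fun k _ l _ hkl n => hsmuldisj a k l hkl n)]
    refine Finset.sum_le_sum (fun k _ => ?_)
    refine Real.rpow_le_rpow (norm_nonneg _) ?_ hP.le
    rw [norm_smul]
    exact le_trans (mul_le_mul_of_nonneg_left (hv1 k) (norm_nonneg _)) (by
      rw [mul_one])
  have hsummable : ∀ a : Xp, Summable (fun k => a k • v k) := by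
    intro a
    rw [summable_iff_vanishing]
    intro e he
    obtain ⟨ε₀, hε₀, hball⟩ := Metric.mem_nhds_iff.1 he
    have hsa : Summable (fun k => ‖(a : ∀ _ : ℕ, ℝ) k‖ ^ p.toReal) :=
      (lp.memℓp a).summable hP
    obtain ⟨s, hs⟩ := hsa.vanishing (e := Metric.ball 0 (ε₀ ^ p.toReal))
      (Metric.ball_mem_nhds _ (Real.rpow_pos_of_pos hε₀ _))
    refine ⟨s, fun t ht => ?_⟩
    refine hball ?_
    rw [Metric.mem_ball, dist_zero_right]
    have h1 := hs t ht
    rw [Metric.mem_ball, dist_zero_right, Real.norm_eq_abs] at h1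
    have h2 : ∑ k ∈ t, ‖(a : ∀ _ : ℕ, ℝ) k‖ ^ p.toReal < ε₀ ^ p.toReal :=
      lt_of_le_of_lt (le_abs_self _) h1
    have h3 : ‖∑ k ∈ t, a k • v k‖ ^ p.toReal < ε₀ ^ p.toReal :=
      lt_of_le_of_lt (hpartial a t) h2
    exact rpow_lt_of_rpow_lt hP (norm_nonneg _) hε₀.le h3
  have hbound : ∀ a : Xp, ‖∑' k, (a : ∀ _ : ℕ, ℝ) k • v k‖ ≤ ‖a‖ := by
    intro a
    refine le_of_tendsto' (hsummable a).hasSum.norm ?_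
    intro s
    rw [← Real.rpow_le_rpow_iff (norm_nonneg _) (norm_nonneg _) hP]
    exact le_trans (hpartial a s) (lp.sum_rpow_le_norm_rpow hP a s)
  set S0 : Xp →ₗ[ℝ] Xp :=
    { toFun := fun a => ∑' k, a k • v k
      map_add' := by
        intro a b
        show (∑' k, ((a + b : Xp) : ∀ _ : ℕ, ℝ) k • v k)
            = (∑' k, (a : ∀ _ : ℕ, ℝ) k • v k) + ∑' k, (b : ∀ _ : ℕ, ℝ) k • v k
        have h1 : ∀ k : ℕ, ((a + b : Xp) : ∀ _ : ℕ, ℝ) k • v k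
            = a k • v k + b k • v k := by
          intro k
          rw [lp.coeFn_add, Pi.add_apply, add_smul]
        rw [tsum_congr h1, Summable.tsum_add (hsummable a) (hsummable b)]
      map_smul' := by
        intro c a
        show (∑' k, ((c • a : Xp) : ∀ _ : ℕ, ℝ) k • v k)
            = (RingHom.id ℝ) c • ∑' k, (a : ∀ _ : ℕ, ℝ) k • v k
        have h1 : ∀ k : ℕ, ((c • a : Xp) : ∀ _ : ℕ, ℝ) k • v k
            = c • (a k • v k) := by
          intro k
          rw [lp.coeFn_smul, Pi.smul_apply, smul_smul]
          rfl
        rw [RingHom.id_apply, tsum_congr h1, Summable.tsum_const_smul c (hsummable a)] } with hS0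
  refine ⟨S0.mkContinuous 1 (fun a => by rw [one_mul]; exact hbound a), ?_, ?_⟩
  · exact LinearMap.mkContinuous_norm_le _ zero_le_one _
  · intro a
    exact (hsummable a).hasSum

/-- lower bound for disjointly supported sums -/
lemma tsum_disjoint_lower (hP : 0 < p.toReal) {w : ℕ → Xp} {cγ : ℝ} (hcγ : 0 ≤ cγ)
    (hw : ∀ k, cγ ≤ ‖w k‖)
    (hdisj : ∀ k l, k ≠ l → ∀ n : ℕ, w k n = 0 ∨ w l n = 0)
    (a : Xp) (hsum : Summable (fun k => (a : ∀ _ : ℕ, ℝ) k • w k)) :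
    cγ * ‖a‖ ≤ ‖∑' k, (a : ∀ _ : ℕ, ℝ) k • w k‖ := by
  have hsmuldisj : ∀ (k l : ℕ), k ≠ l → ∀ n : ℕ,
      (a k • w k : Xp) n = 0 ∨ (a l • w l : Xp) n = 0 := by
    intro k l hkl n
    rcases hdisj k l hkl n with h | h
    · exact Or.inl (by rw [lp.coeFn_smul, Pi.smul_apply, h, smul_zero])
    · exact Or.inr (by rw [lp.coeFn_smul, Pi.smul_apply, h, smul_zero])
  have hpartial : ∀ s : Finset ℕ,
      cγ * (∑ k ∈ s, ‖(a : ∀ _ : ℕ, ℝ) k‖ ^ p.toReal) ^ (1 / p.toReal)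
        ≤ ‖∑ k ∈ s, (a : ∀ _ : ℕ, ℝ) k • w k‖ := by
    intro s
    have h1 : ‖∑ k ∈ s, (a : ∀ _ : ℕ, ℝ) k • w k‖ ^ p.toReal
        = ∑ k ∈ s, ‖(a : ∀ _ : ℕ, ℝ) k • w k‖ ^ p.toReal :=
      norm_sum_disjoint_rpow hP s _ (fun k _ l _ hkl n => hsmuldisj k l hkl n)
    have h2 : cγ ^ p.toReal * ∑ k ∈ s, ‖(a : ∀ _ : ℕ, ℝ) k‖ ^ p.toReal
        ≤ ∑ k ∈ s, ‖(a : ∀ _ : ℕ, ℝ) k • w k‖ ^ p.toReal := by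
      rw [Finset.mul_sum]
      refine Finset.sum_le_sum (fun k _ => ?_)
      rw [norm_smul, Real.mul_rpow (norm_nonneg _) (norm_nonneg _), mul_comm]
      exact mul_le_mul_of_nonneg_left
        (Real.rpow_le_rpow hcγ (hw k) hP.le)
        (Real.rpow_nonneg (norm_nonneg ((a : ∀ _ : ℕ, ℝ) k)) p.toReal)
    have h3 : (cγ ^ p.toReal * ∑ k ∈ s, ‖(a : ∀ _ : ℕ, ℝ) k‖ ^ p.toReal) ^ (1 / p.toReal)
        ≤ (‖∑ k ∈ s, (a : ∀ _ : ℕ, ℝ) k • w k‖ ^ p.toReal) ^ (1 / p.toReal) := by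
      refine Real.rpow_le_rpow ?_ (le_trans h2 (le_of_eq h1.symm)) (by positivity)
      positivity
    rw [Real.mul_rpow (Real.rpow_nonneg hcγ _) (by positivity),
      ← Real.rpow_mul hcγ, mul_one_div, div_self hP.ne', Real.rpow_one] at h3
    rwa [← Real.rpow_mul (norm_nonneg _), mul_one_div, div_self hP.ne',
      Real.rpow_one] at h3
  have hlim1 : Filter.Tendsto (fun s : Finset ℕ =>
      cγ * (∑ k ∈ s, ‖(a : ∀ _ : ℕ, ℝ) k‖ ^ p.toReal) ^ (1 / p.toReal))
      Filter.atTop (nhds (cγ * ‖a‖)) := by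
    have h2 : Filter.Tendsto (fun s : Finset ℕ =>
        ∑ k ∈ s, ‖(a : ∀ _ : ℕ, ℝ) k‖ ^ p.toReal) Filter.atTop
        (nhds (‖a‖ ^ p.toReal)) := (lp.hasSum_norm hP a)
    have h3 := h2.rpow_const (p := 1 / p.toReal) (Or.inr (by positivity))
    rw [← Real.rpow_mul (norm_nonneg _), mul_one_div, div_self hP.ne',
      Real.rpow_one] at h3
    exact h3.const_mul cγ
  exact le_of_tendsto_of_tendsto' hlim1 hsum.hasSum.norm hpartial

include hp1 hp2

set_option maxHeartbeats 1000000 in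
/-- The main gliding hump construction. -/
lemma exists_good_op (T : Xp →L[ℝ] Xp) {γ ε' : ℝ} (hγ : 0 < γ) (hε' : 0 < ε')
    (hnH : ∀ G : Finset (StrongDual ℝ Xp), ∃ x : Xp, (∀ f ∈ G, f x = 0) ∧ γ * ‖x‖ < ‖T x‖) :
    ∃ S : Xp →L[ℝ] Xp, ‖S‖ ≤ 1 ∧ ∀ a : Xp, (γ - 3 * ε') * ‖a‖ ≤ ‖T (S a)‖ := by
  classical
  have hP : 0 < p.toReal := lt_trans zero_lt_one (hP' hp1 hp2)
  rcases le_or_gt γ (3 * ε') with hdeg | hnon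
  · refine ⟨0, by simp, fun a => ?_⟩
    have h1 : (γ - 3 * ε') * ‖a‖ ≤ 0 :=
      mul_nonpos_of_nonpos_of_nonneg (by linarith) (norm_nonneg _)
    exact le_trans h1 (norm_nonneg _)
  set η : ℕ → ℝ := fun k => ε' / 4 * (1 / 2) ^ k with hη
  have hηpos : ∀ k, 0 < η k := fun k => by positivity
  have hηle : ∀ k, η k ≤ ε' / 4 := by
    intro k
    rw [hη]
    have h1 : ((1:ℝ) / 2) ^ k ≤ 1 := pow_le_one₀ (by norm_num) (by norm_num)
    nlinarith
  -- the recursion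
  obtain ⟨f, hf0, hfR⟩ := rec_seq ((0, 0, 0, 0) : ℕ × ℕ × ℕ × Xp)
    (R := fun s t => t.1 = s.1 + 1 ∧ s.2.1 < t.2.1 ∧ s.2.2.1 < t.2.2.1 ∧
      ‖t.2.2.2‖ ≤ 1 ∧ (∀ i, i < s.2.2.1 → t.2.2.2 i = 0) ∧
      (∀ i, t.2.2.1 ≤ i → t.2.2.2 i = 0) ∧
      γ - ε' ≤ ‖T t.2.2.2‖ ∧
      ‖trunc (Finset.range s.2.1) (T t.2.2.2)‖ ≤ η s.1 ∧
      ‖T t.2.2.2 - trunc (Finset.range t.2.1) (T t.2.2.2)‖ ≤ η s.1)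
    (fun s => by
      obtain ⟨n₀, hn₀⟩ := head_tail hp1 hp2 T s.2.1
        (δ := η s.1 / (s.2.1 + 1)) (by positivity)
      obtain ⟨v, m₂, hm₂, hv1, hv2, hv3, hv4⟩ :=
        sel hp1 hp2 T hγ hnH (max s.2.2.1 n₀) hε'
      obtain ⟨m₃, hm₃⟩ := exists_trunc_tail_small hP (T v) (hηpos s.1)
      refine ⟨(s.1 + 1, max m₃ (s.2.1 + 1), m₂, v), rfl,
        lt_of_lt_of_le (Nat.lt_succ_self _) (le_max_right _ _),
        lt_of_le_of_lt (le_max_left _ _) hm₂, hv1,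
        (fun i hi => hv2 i (lt_of_lt_of_le hi (le_max_left _ _))), hv3, hv4, ?_, ?_⟩
      · have hcoord : ∀ j, j < s.2.1 → |(T v : ∀ _ : ℕ, ℝ) j| ≤ η s.1 / (s.2.1 + 1) :=
          fun j hj => hn₀ v hv1
            (fun i hi => hv2 i (lt_of_lt_of_le hi (le_max_right _ _))) j hj
        refine le_trans (norm_trunc_le_sum hp1 hp2 hP s.2.1 (T v) (by positivity) hcoord) ?_
        have hc1 : (0:ℝ) < (s.2.1 : ℝ) + 1 := by positivity
        rw [mul_div_assoc', div_le_iff₀ hc1]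
        have h2 : (s.2.1 : ℝ) ≤ (s.2.1 : ℝ) + 1 := by linarith
        nlinarith [hηpos s.1]
      · exact hm₃ _ (le_max_left _ _))
  have hidx : ∀ k, (f k).1 = k := by
    intro k
    induction k with
    | zero => rw [hf0]
    | succ k ih => rw [(hfR k).1, ih]
  set cc : ℕ → ℕ := fun k => (f k).2.1 with hcc
  set mm : ℕ → ℕ := fun k => (f k).2.2.1 with hmm
  set v : ℕ → Xp := fun k => (f (k + 1)).2.2.2 with hv
  have hccmono : StrictMono cc := strictMono_nat_of_lt_succ (fun k => (hfR k).2.1)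
  have hmmmono : StrictMono mm := strictMono_nat_of_lt_succ (fun k => (hfR k).2.2.1)
  have hv1 : ∀ k, ‖v k‖ ≤ 1 := fun k => (hfR k).2.2.2.1
  have hvlo : ∀ k i, i < mm k → v k i = 0 := fun k => (hfR k).2.2.2.2.1
  have hvhi : ∀ k i, mm (k + 1) ≤ i → v k i = 0 := fun k => (hfR k).2.2.2.2.2.1
  have hTv : ∀ k, γ - ε' ≤ ‖T (v k)‖ := fun k => (hfR k).2.2.2.2.2.2.1
  have hhead : ∀ k, ‖trunc (Finset.range (cc k)) (T (v k))‖ ≤ η k := by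
    intro k
    have h := (hfR k).2.2.2.2.2.2.2.1
    rwa [hidx k] at h
  have htail : ∀ k, ‖T (v k) - trunc (Finset.range (cc (k + 1))) (T (v k))‖ ≤ η k := by
    intro k
    have h := (hfR k).2.2.2.2.2.2.2.2
    rwa [hidx k] at h
  have hvdisj : ∀ k l, k ≠ l → ∀ n : ℕ, v k n = 0 ∨ v l n = 0 := by
    have key : ∀ k l, k < l → ∀ n : ℕ, v k n = 0 ∨ v l n = 0 := by
      intro k l hkl n
      rcases lt_or_ge n (mm (k + 1)) with h' | h'
      · exact Or.inr (hvlo l n (lt_of_lt_of_le h' (hmmmono.monotone (Nat.succ_le_of_lt hkl))))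
      · exact Or.inl (hvhi k n h')
    intro k l hkl n
    rcases lt_or_gt_of_ne hkl with h | h
    · exact key k l h n
    · exact (key l k h n).symm
  set w : ℕ → Xp := fun k => trunc (Finset.Ico (cc k) (cc (k + 1))) (T (v k)) with hw
  have hwlo : ∀ k i, i < cc k → w k i = 0 := by
    intro k i hi
    exact trunc_apply_of_not_mem _ _ (by
      simp only [Finset.mem_Ico, not_and, not_lt]
      intro h; omega)
  have hwhi : ∀ k i, cc (k + 1) ≤ i → w k i = 0 := by
    intro k i hi
    exact trunc_apply_of_not_mem _ _ (by
      simp only [Finset.mem_Ico, not_and, not_lt]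
      intro h; omega)
  have hwdisj : ∀ k l, k ≠ l → ∀ n : ℕ, w k n = 0 ∨ w l n = 0 := by
    have key : ∀ k l, k < l → ∀ n : ℕ, w k n = 0 ∨ w l n = 0 := by
      intro k l hkl n
      rcases lt_or_ge n (cc (k + 1)) with h' | h'
      · exact Or.inr (hwlo l n (lt_of_lt_of_le h' (hccmono.monotone (Nat.succ_le_of_lt hkl))))
      · exact Or.inl (hwhi k n h')
    intro k l hkl n
    rcases lt_or_gt_of_ne hkl with h | h
    · exact key k l h n
    · exact (key l k h n).symm
  have hsplit : ∀ k, trunc (Finset.range (cc (k + 1))) (T (v k))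
      = trunc (Finset.range (cc k)) (T (v k)) + w k := by
    intro k
    simp only [trunc, hw, Finset.range_eq_Ico]
    exact (Finset.sum_Ico_consecutive _ (Nat.zero_le _)
      (le_of_lt (hccmono (Nat.lt_succ_self k)))).symm
  have hTw : ∀ k, ‖T (v k) - w k‖ ≤ 2 * η k := by
    intro k
    have h1 : T (v k) - w k
        = (T (v k) - trunc (Finset.range (cc (k + 1))) (T (v k)))
          + trunc (Finset.range (cc k)) (T (v k)) := by
      rw [hsplit k]; abel
    rw [h1]
    calc ‖_ + _‖ ≤ _ + _ := norm_add_le _ _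
      _ ≤ η k + η k := add_le_add (htail k) (hhead k)
      _ = 2 * η k := by ring
  have hwlow : ∀ k, γ - 2 * ε' ≤ ‖w k‖ := by
    intro k
    have h1 := norm_sub_norm_le (T (v k)) (w k)
    have h2 := hTw k
    have h3 := hTv k
    have h4 := hηle k
    linarith
  -- the operator
  obtain ⟨S, hSnorm, hSsum⟩ := exists_sum_op hP hv1 hvdisj
  refine ⟨S, hSnorm, fun a => ?_⟩
  have hanorm : ∀ k, |(a : ∀ _ : ℕ, ℝ) k| ≤ ‖a‖ := by
    intro k
    have h := lp.norm_apply_le_norm (p_ne_zero (p := p)) a k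
    rwa [Real.norm_eq_abs] at h
  have hTsum : HasSum (fun k => (a : ∀ _ : ℕ, ℝ) k • T (v k)) (T (S a)) := by
    have h1 := (hSsum a).mapL T
    simp only [map_smul] at h1
    exact h1
  set d : ℕ → Xp := fun k => (a : ∀ _ : ℕ, ℝ) k • (T (v k) - w k) with hd
  have hd_norm : ∀ k, ‖d k‖ ≤ ‖a‖ * (ε' / 2 * (1 / 2) ^ k) := by
    intro k
    rw [hd]
    simp only []
    rw [norm_smul, Real.norm_eq_abs]
    have h1 : ‖T (v k) - w k‖ ≤ ε' / 2 * (1 / 2) ^ k := by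
      have h2 := hTw k
      rw [hη] at h2
      calc ‖T (v k) - w k‖ ≤ 2 * (ε' / 4 * (1 / 2) ^ k) := h2
        _ = ε' / 2 * (1 / 2) ^ k := by ring
    exact mul_le_mul (hanorm k) h1 (norm_nonneg _) (norm_nonneg _)
  have hgeo : Summable (fun k : ℕ => ‖a‖ * (ε' / 2 * (1 / 2) ^ k)) := by
    have h1 : Summable (fun k : ℕ => ((1:ℝ) / 2) ^ k) := summable_geometric_two
    exact (h1.mul_left (ε' / 2)).mul_left ‖a‖
  have hd_norm_summable : Summable (fun k => ‖d k‖) :=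
    Summable.of_nonneg_of_le (fun k => norm_nonneg _) hd_norm hgeo
  have hd_summable : Summable d := Summable.of_norm hd_norm_summable
  have hu_hasSum : HasSum (fun k => (a : ∀ _ : ℕ, ℝ) k • w k) (T (S a) - ∑' k, d k) := by
    have h1 := hTsum.sub hd_summable.hasSum
    have h2 : (fun k => (a : ∀ _ : ℕ, ℝ) k • T (v k) - d k)
        = fun k => (a : ∀ _ : ℕ, ℝ) k • w k := by
      funext k
      rw [hd]
      simp only []
      rw [smul_sub]
      abel
    rwa [h2] at h1
  have hlower : (γ - 2 * ε') * ‖a‖ ≤ ‖T (S a) - ∑' k, d k‖ := by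
    have h1 := tsum_disjoint_lower hP (by linarith : (0:ℝ) ≤ γ - 2 * ε')
      hwlow hwdisj a ⟨_, hu_hasSum⟩
    rwa [hu_hasSum.tsum_eq] at h1
  have hdbound : ‖∑' k, d k‖ ≤ ‖a‖ * ε' := by
    refine le_trans (norm_tsum_le_tsum_norm hd_norm_summable) ?_
    refine le_trans (Summable.tsum_le_tsum hd_norm hd_norm_summable hgeo) ?_
    have h1 : (fun k : ℕ => ‖a‖ * (ε' / 2 * (1 / 2) ^ k))
        = fun k : ℕ => (‖a‖ * (ε' / 2)) * (1 / 2) ^ k := by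
      funext k; ring
    rw [h1, tsum_mul_left, tsum_geometric_two]
    have h2 := norm_nonneg a
    nlinarith
  have h2 := norm_sub_le (T (S a)) (∑' k, d k)
  have h4 := norm_nonneg a
  nlinarith [hlower, hdbound, h2]

omit hp1 hp2

/-- Hahn-Banach covering step -/
lemma cover_step {E : Type*} [NormedAddCommGroup E] [NormedSpace ℝ E]
    (T : E →L[ℝ] E) {γ ε2 : ℝ} (hγ : 0 ≤ γ) (hε2 : 0 < ε2)
    (G : Finset (StrongDual ℝ E)) (hG : ∀ x : E, (∀ f ∈ G, f x = 0) → ‖T x‖ ≤ γ * ‖x‖) :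
    ∃ F : Finset (StrongDual ℝ E), ∀ g : StrongDual ℝ E, ‖g‖ ≤ 1 →
      ∃ y ∈ F, ‖g.comp T - y‖ ≤ γ + ε2 := by
  classical
  set M : Submodule ℝ E := ⨅ f ∈ G, LinearMap.ker (f : E →ₗ[ℝ] ℝ) with hM
  have hMmem : ∀ x : E, x ∈ M ↔ ∀ f ∈ G, f x = 0 := by
    intro x
    simp only [hM, Submodule.mem_iInf, LinearMap.mem_ker, ContinuousLinearMap.coe_coe]
  set V : Submodule ℝ (StrongDual ℝ E) := Submodule.span ℝ (G : Set (StrongDual ℝ E)) with hV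
  haveI : FiniteDimensional ℝ ↥V := FiniteDimensional.span_of_finite ℝ G.finite_toSet
  have hKcomp : IsCompact ((Subtype.val : ↥V → StrongDual ℝ E) ''
      (Metric.closedBall (0 : ↥V) (‖T‖ + γ))) :=
    (isCompact_closedBall _ _).image continuous_subtype_val
  obtain ⟨t, _hts, htf, htcover⟩ := hKcomp.finite_cover_balls hε2
  refine ⟨htf.toFinset, fun g hg => ?_⟩
  set h : StrongDual ℝ E := g.comp T with hh
  set f0 : ↥M →L[ℝ] ℝ := h.comp M.subtypeL with hf0
  have hf0norm : ‖f0‖ ≤ γ := by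
    refine ContinuousLinearMap.opNorm_le_bound _ hγ (fun x => ?_)
    have h1 : ‖T (x : E)‖ ≤ γ * ‖(x : E)‖ := hG _ ((hMmem _).1 x.2)
    calc ‖f0 x‖ = ‖g (T (x : E))‖ := rfl
      _ ≤ ‖g‖ * ‖T (x : E)‖ := g.le_opNorm _
      _ ≤ 1 * (γ * ‖(x : E)‖) :=
          mul_le_mul hg h1 (norm_nonneg _) zero_le_one
      _ = γ * ‖x‖ := by rw [one_mul]; rfl
  obtain ⟨ht, hext, hnorm⟩ := exists_extension_norm_eq M f0
  set φ : StrongDual ℝ E := h - ht with hφ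
  have hφM : ∀ x ∈ M, φ x = 0 := by
    intro x hx
    have h1 : ht x = f0 ⟨x, hx⟩ := hext ⟨x, hx⟩
    have h2 : f0 ⟨x, hx⟩ = h x := rfl
    simp only [hφ, ContinuousLinearMap.sub_apply, h1, h2, sub_self]
  have hφV : φ ∈ V := by
    set L : {f // f ∈ G} → E →ₗ[ℝ] ℝ := fun f => ((f : StrongDual ℝ E) : E →ₗ[ℝ] ℝ) with hL
    have hker : ⨅ i, LinearMap.ker (L i) ≤ LinearMap.ker (φ : E →ₗ[ℝ] ℝ) := by
      intro x hx
      simp only [Submodule.mem_iInf, LinearMap.mem_ker] at hx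
      have hxM : x ∈ M := (hMmem x).2 (fun f hf => hx ⟨f, hf⟩)
      exact hφM x hxM
    have hspan := mem_span_of_iInf_ker_le_ker hker
    have hrange : Set.range L
        = (fun f : StrongDual ℝ E => (f : E →ₗ[ℝ] ℝ)) '' (G : Set (StrongDual ℝ E)) := by
      ext ψ
      constructor
      · rintro ⟨⟨f, hf⟩, rfl⟩
        exact ⟨f, hf, rfl⟩
      · rintro ⟨f, hf, rfl⟩
        exact ⟨⟨f, hf⟩, rfl⟩
    rw [hrange] at hspan
    have himg : (fun f : StrongDual ℝ E => (f : E →ₗ[ℝ] ℝ)) '' (G : Set (StrongDual ℝ E))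
        = (ContinuousLinearMap.coeLM ℝ) '' (G : Set (StrongDual ℝ E)) := rfl
    rw [himg, ← Submodule.map_span] at hspan
    obtain ⟨ψ, hψV, hψeq⟩ := hspan
    have heq : ψ = φ := by
      apply ContinuousLinearMap.coe_injective
      exact hψeq
    rwa [← heq]
  have hφnorm : ‖φ‖ ≤ ‖T‖ + γ := by
    have h1 : ‖h‖ ≤ ‖T‖ := by
      refine le_trans (ContinuousLinearMap.opNorm_comp_le _ _) ?_
      calc ‖g‖ * ‖T‖ ≤ 1 * ‖T‖ := mul_le_mul_of_nonneg_right hg (norm_nonneg _)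
        _ = ‖T‖ := one_mul _
    have h2 : ‖ht‖ ≤ γ := le_trans (le_of_eq hnorm) hf0norm
    calc ‖φ‖ ≤ ‖h‖ + ‖ht‖ := norm_sub_le _ _
      _ ≤ ‖T‖ + γ := add_le_add h1 h2
  have hφK : φ ∈ (Subtype.val : ↥V → StrongDual ℝ E) ''
      (Metric.closedBall (0 : ↥V) (‖T‖ + γ)) := by
    refine ⟨⟨φ, hφV⟩, ?_, rfl⟩
    rw [Metric.mem_closedBall]
    exact (dist_zero_right _).trans_le hφnorm
  have hcov := htcover hφK
  simp only [Set.mem_iUnion] at hcov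
  obtain ⟨y, hyt, hy⟩ := hcov
  refine ⟨y, htf.mem_toFinset.2 hyt, ?_⟩
  rw [Metric.mem_ball, dist_eq_norm] at hy
  have h1 : h - y = ht + (φ - y) := by rw [hφ]; abel
  calc ‖h - y‖ = ‖ht + (φ - y)‖ := by rw [h1]
    _ ≤ ‖ht‖ + ‖φ - y‖ := norm_add_le _ _
    _ ≤ γ + ε2 := add_le_add (le_trans (le_of_eq hnorm) hf0norm) hy.le

end Stmt19Aux


theorem stmt19 (p : ℝ≥0∞) [Fact (1 ≤ p)] (hp1 : 1 < p) (hp2 : p ≠ ⊤)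
    (T : lp (fun _ : ℕ => ℝ) p →L[ℝ] lp (fun _ : ℕ => ℝ) p) :
    chiOp (adjOp T) ≤ SSZ (lp (fun _ : ℕ => ℝ) p) T := by
  classical
  have hP : 0 < p.toReal := lt_trans zero_lt_one (Stmt19Aux.hP' hp1 hp2)
  set X := lp (fun _ : ℕ => ℝ) p with hX
  set SSet : Set ℝ := { r : ℝ | ∃ R : X →L[ℝ] X, ∃ c : ℝ, 0 < c ∧
      (∀ z, c * ‖z‖ ≤ ‖T (R z)‖) ∧ r = c / ‖R‖ } with hSSet
  have hSSZ : SSZ X T = sSup SSet := rfl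
  set z₀ : X := lp.single p 0 (1:ℝ) with hz₀
  have hz₀norm : ‖z₀‖ = 1 := by
    have h := lp.norm_single (E := fun _ : ℕ => ℝ) (ENNReal.toReal_pos_iff.1 hP).1 0 (1:ℝ)
    simpa using h
  have hbdd : BddAbove SSet := by
    refine ⟨‖T‖, fun r hr => ?_⟩
    obtain ⟨R, c, hc, hb, rfl⟩ := hr
    have h1 : c * ‖z₀‖ ≤ ‖T (R z₀)‖ := hb z₀
    have h2 : ‖T (R z₀)‖ ≤ ‖T‖ * (‖R‖ * ‖z₀‖) :=
      le_trans (T.le_opNorm _) (mul_le_mul_of_nonneg_left (R.le_opNorm _) (norm_nonneg _))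
    rw [hz₀norm] at h1 h2
    rw [mul_one] at h1
    rw [mul_one] at h2
    have h3 : c ≤ ‖T‖ * ‖R‖ := by linarith
    have hR : 0 < ‖R‖ := by
      rcases (norm_nonneg R).lt_or_eq with h | h
      · exact h
      · exfalso; rw [← h, mul_zero] at h3; linarith
    rw [div_le_iff₀ hR]
    exact h3
  have hs0 : 0 ≤ SSZ X T := by
    rw [hSSZ]
    exact Real.sSup_nonneg (fun r hr => by
      obtain ⟨R, c, hc, _, rfl⟩ := hr
      exact div_nonneg hc.le (norm_nonneg _))
  refine le_of_forall_pos_le_add (fun ε hε => ?_)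
  set γ : ℝ := SSZ X T + ε / 2 with hγdef
  have hγpos : 0 < γ := by rw [hγdef]; linarith
  by_cases H : ∃ G : Finset (StrongDual ℝ X), ∀ x : X, (∀ f ∈ G, f x = 0) → ‖T x‖ ≤ γ * ‖x‖
  · -- covering case
    obtain ⟨G, hG⟩ := H
    obtain ⟨F, hF⟩ := Stmt19Aux.cover_step T hγpos.le (half_pos hε) G hG
    have hadj : ∀ g : StrongDual ℝ X, adjOp T g = g.comp T := fun g => rfl
    have hmem : γ + ε / 2 ∈ { r : ℝ | ∃ F : Finset (StrongDual ℝ X),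
        ∀ a ∈ adjOp T '' Metric.closedBall 0 1, ∃ y ∈ F, dist a y ≤ r } := by
      refine ⟨F, ?_⟩
      rintro a ⟨g, hgball, rfl⟩
      have hg1 : ‖g‖ ≤ 1 := mem_closedBall_zero_iff.1 hgball
      obtain ⟨y, hyF, hy⟩ := hF g hg1
      exact ⟨y, hyF, by rw [dist_eq_norm, hadj g]; exact hy⟩
    have hlb : BddBelow { r : ℝ | ∃ F : Finset (StrongDual ℝ X),
        ∀ a ∈ adjOp T '' Metric.closedBall 0 1, ∃ y ∈ F, dist a y ≤ r } := by
      refine ⟨0, fun r hr => ?_⟩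
      obtain ⟨F', hF'⟩ := hr
      have h0 : adjOp T 0 ∈ adjOp T '' Metric.closedBall 0 1 :=
        ⟨0, Metric.mem_closedBall_self zero_le_one, rfl⟩
      obtain ⟨y, _, hy⟩ := hF' _ h0
      exact le_trans dist_nonneg hy
    have hfin : chiOp (adjOp T) ≤ γ + ε / 2 := csInf_le hlb hmem
    rw [hγdef] at hfin
    linarith
  · -- gliding hump case: contradiction
    exfalso
    push_neg at H
    obtain ⟨S, hS1, hS2⟩ := Stmt19Aux.exists_good_op hp1 hp2 T hγpos
      (ε' := ε / 16) (by positivity) H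
    set c : ℝ := γ - 3 * (ε / 16) with hcdef
    have hcs : SSZ X T < c := by rw [hcdef, hγdef]; linarith
    have hcpos : 0 < c := lt_of_le_of_lt hs0 hcs
    have hSpos : 0 < ‖S‖ := by
      have h1 : c * ‖z₀‖ ≤ ‖T (S z₀)‖ := hS2 z₀
      have h2 : ‖T (S z₀)‖ ≤ ‖T‖ * (‖S‖ * ‖z₀‖) :=
        le_trans (T.le_opNorm _) (mul_le_mul_of_nonneg_left (S.le_opNorm _) (norm_nonneg _))
      rw [hz₀norm, mul_one] at h1
      rw [hz₀norm, mul_one] at h2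
      rcases (norm_nonneg S).lt_or_eq with h | h
      · exact h
      · exfalso; rw [← h, mul_zero] at h2; linarith
    have hmem : c / ‖S‖ ∈ SSet := ⟨S, c, hcpos, hS2, rfl⟩
    have hle : c / ‖S‖ ≤ SSZ X T := by rw [hSSZ]; exact le_csSup hbdd hmem
    have hcc : c ≤ c / ‖S‖ := by
      rw [le_div_iff₀ hSpos]
      nlinarith
    linarith
end
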